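/- arXiv:2206.07236 — 6 statements merged into one kernel-verified Lean document; each statement's English description precedes it below -/
import Mathlib

section
/- Fix δ ≥ 0 and α ∈ (0,1) such that k := ⌈(1−α)(n+1)⌉ ≤ n. For each j ∈ {1,…,n} define the step-down nonconformity score S_j := inf{λ > 0 : L(X_j, Y_j, I_j, λ') ≤ δ for all λ' ≥ λ}, and let λ̂ be the k-th smallest value among S_1, …, S_n. Then ℙ( L(X_{n+1}, Y_{n+1}, I_{n+1}, λ̂) ≤ δ ) ≥ 1 − α; that is, the step-down probe-based conformalization procedure returns a probe-adapted predictive set mapping x ↦ C^s_{λ̂}(x) that controls the (1−α)-value-at-risk of the FPP loss at level δ. -/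
open MeasureTheory ProbabilityTheory Set

private lemma exists_gap {κ : Type*} [Fintype κ] (c : κ → ℝ) (t : ℝ) :
    ∃ ε > 0, ∀ i, c i ≤ t + ε ↔ c i ≤ t := by
  classical
  rcases (Finset.univ.filter fun i => t < c i).eq_empty_or_nonempty with h | h
  · refine ⟨1, one_pos, fun i => ?_⟩
    have hle : c i ≤ t := by
      by_contra hlt
      push_neg at hlt
      exact absurd (Finset.mem_filter.mpr ⟨Finset.mem_univ i, hlt⟩ : i ∈ Finset.univ.filter fun i => t < c i)
        (h ▸ Finset.notMem_empty i)
    constructor <;> intro _ <;> linarith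
  · obtain ⟨i0, hi0, hi0e⟩ := Finset.exists_mem_eq_inf' h c
    have hmt : t < (Finset.univ.filter fun i => t < c i).inf' h c := by
      rw [hi0e]; exact (Finset.mem_filter.mp hi0).2
    refine ⟨((Finset.univ.filter fun i => t < c i).inf' h c - t) / 2, by linarith, fun i => ?_⟩
    by_cases hi : t < c i
    · have : (Finset.univ.filter fun j => t < c j).inf' h c ≤ c i :=
        Finset.inf'_le c (Finset.mem_filter.mpr ⟨Finset.mem_univ i, hi⟩)
      constructor <;> intro h' <;> linarith
    · push_neg at hi
      constructor <;> intro _ <;> linarith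

private lemma natCard_eq_filter {κ : Type*} [Fintype κ] (p : κ → Prop) [DecidablePred p] :
    Nat.card {i // p i} = (Finset.univ.filter p).card := by
  rw [Nat.card_eq_fintype_card, Fintype.card_subtype]

private lemma card_filter_val_lt {N k : ℕ} (hk : k ≤ N) :
    (Finset.univ.filter fun i : Fin N => (i : ℕ) < k).card = k := by
  classical
  have h : (Finset.univ.filter fun i : Fin N => (i : ℕ) < k).card = (Finset.range k).card := by
    apply Finset.card_bij (fun (i : Fin N) _ => (i : ℕ))
    · intro a ha
      simp only [Finset.mem_filter] at ha
      exact Finset.mem_range.mpr ha.2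
    · intro a _ b _ hab
      exact Fin.val_injective hab
    · intro b hb
      have hbN : b < N := lt_of_lt_of_le (Finset.mem_range.mp hb) hk
      exact ⟨⟨b, hbN⟩, Finset.mem_filter.mpr ⟨Finset.mem_univ _, Finset.mem_range.mp hb⟩, rfl⟩
  rw [h, Finset.card_range]

private lemma rank_count {N k : ℕ} (hk : k ≤ N) (v : Fin N → ℝ) :
    k ≤ (Finset.univ.filter fun m =>
      (Finset.univ.filter fun j => v j < v m).card < k).card := by
  classical
  set σ := Tuple.sort v with hσ
  have hmono := Tuple.monotone_sort v
  have hsub : (Finset.univ.filter fun i : Fin N => (i : ℕ) < k).image σ ⊆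
      Finset.univ.filter fun m => (Finset.univ.filter fun j => v j < v m).card < k := by
    intro m hm
    simp only [Finset.mem_image, Finset.mem_filter, Finset.mem_univ, true_and] at hm ⊢
    obtain ⟨i, hi, rfl⟩ := hm
    have hle : (Finset.univ.filter fun j => v j < v (σ i)).card ≤
        (Finset.univ.filter fun j : Fin N => (j : ℕ) < (i : ℕ)).card := by
      apply Finset.card_le_card_of_injOn (fun j => σ.symm j)
      · intro j hj
        simp only [Finset.mem_coe, Finset.mem_filter, Finset.mem_univ, true_and] at hj ⊢
        by_contra hle
        push_neg at hle
        have hile : i ≤ σ.symm j := Fin.le_def.mpr hle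
        have := hmono hile
        simp only [Function.comp_apply, ← hσ, Equiv.apply_symm_apply] at this
        linarith
      · intro a _ b _ hab
        simpa using congrArg σ hab
    have hcard : (Finset.univ.filter fun j : Fin N => (j : ℕ) < (i : ℕ)).card = (i : ℕ) :=
      card_filter_val_lt (le_of_lt i.isLt)
    omega
  calc k = (Finset.univ.filter fun i : Fin N => (i : ℕ) < k).card :=
        (card_filter_val_lt hk).symm
    _ = ((Finset.univ.filter fun i : Fin N => (i : ℕ) < k).image σ).card :=
        (Finset.card_image_of_injective _ σ.injective).symm
    _ ≤ _ := Finset.card_le_card hsub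

/-- The False Probe Proportion (FPP) loss of the threshold predictive set `C^s_λ(x)`
on an instance `z = (x, y, I)`: the fraction, among the queried probes `i ∈ I` that the
set answers (those with `|s_i(x)| > λ`), of probes answered incorrectly
(those with `-φ_i(y)·s_i(x) > λ`). -/
noncomputable def fpp {𝒳 𝒴 ι : Type*} [Fintype ι]
    (φ : ι → 𝒴 → ℝ) (s : ι → 𝒳 → ℝ) (z : 𝒳 × 𝒴 × Finset ι) (lam : ℝ) : ℝ :=
  (Nat.card {i : ι // i ∈ z.2.2 ∧ lam < -(φ i z.2.1) * s i z.1} : ℝ) /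
    max 1 (Nat.card {i : ι // i ∈ z.2.2 ∧ lam < |s i z.1|} : ℝ)

/-- The `k`-th smallest value (k-th order statistic, `1 ≤ k ≤ n`) among `v 0, …, v (n-1)`. -/
noncomputable def kthSmallest {n : ℕ} (v : Fin n → ℝ) (k : ℕ) : ℝ :=
  sInf {t : ℝ | k ≤ Nat.card {j : Fin n // v j ≤ t}}


section fppLemmas

variable {𝒳 𝒴 ι : Type*} [Fintype ι] (φ : ι → 𝒴 → ℝ) (s : ι → 𝒳 → ℝ)

private lemma fpp_locally_const (z : 𝒳 × 𝒴 × Finset ι) (lam : ℝ) :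
    ∃ ε > 0, ∀ lam', lam ≤ lam' → lam' ≤ lam + ε → fpp φ s z lam' = fpp φ s z lam := by
  obtain ⟨ε₁, hε₁, h1⟩ := exists_gap (fun i => -(φ i z.2.1) * s i z.1) lam
  obtain ⟨ε₂, hε₂, h2⟩ := exists_gap (fun i => |s i z.1|) lam
  refine ⟨min ε₁ ε₂, lt_min hε₁ hε₂, fun lam' hge hle => ?_⟩
  have key : ∀ (c : ℝ) (ε : ℝ), (c ≤ lam + ε ↔ c ≤ lam) → min ε₁ ε₂ ≤ ε →
      (lam' < c ↔ lam < c) := by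
    intro c ε hiff hεle
    constructor
    · intro h; exact lt_of_le_of_lt hge h
    · intro h
      have h1' : ¬ c ≤ lam := not_le.mpr h
      have h2' : ¬ c ≤ lam + ε := fun hc => h1' (hiff.mp hc)
      push_neg at h2'
      calc lam' ≤ lam + min ε₁ ε₂ := hle
        _ ≤ lam + ε := by linarith
        _ < c := h2'
  unfold fpp
  have e1 : Nat.card {i : ι // i ∈ z.2.2 ∧ lam' < -(φ i z.2.1) * s i z.1}
      = Nat.card {i : ι // i ∈ z.2.2 ∧ lam < -(φ i z.2.1) * s i z.1} :=
    Nat.card_congr (Equiv.subtypeEquivRight fun i =>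
      and_congr_right fun _ => key _ ε₁ (h1 i) (min_le_left _ _))
  have e2 : Nat.card {i : ι // i ∈ z.2.2 ∧ lam' < |s i z.1|}
      = Nat.card {i : ι // i ∈ z.2.2 ∧ lam < |s i z.1|} :=
    Nat.card_congr (Equiv.subtypeEquivRight fun i =>
      and_congr_right fun _ => key _ ε₂ (h2 i) (min_le_right _ _))
  rw [e1, e2]

private lemma tset_nonempty {δ : ℝ} (hδ : 0 ≤ δ) (z : 𝒳 × 𝒴 × Finset ι) :
    {lam : ℝ | 0 < lam ∧ ∀ lam' ≥ lam, fpp φ s z lam' ≤ δ}.Nonempty := by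
  classical
  refine ⟨1 + ∑ i : ι, |φ i z.2.1 * s i z.1|, ?_, fun lam' hge => ?_⟩
  · have : (0:ℝ) ≤ ∑ i : ι, |φ i z.2.1 * s i z.1| :=
      Finset.sum_nonneg fun i _ => abs_nonneg _
    linarith
  · have hempty : IsEmpty {i : ι // i ∈ z.2.2 ∧ lam' < -(φ i z.2.1) * s i z.1} := by
      refine ⟨fun ⟨i, _, hlt⟩ => ?_⟩
      have h1 : -(φ i z.2.1) * s i z.1 ≤ |φ i z.2.1 * s i z.1| := by
        rw [neg_mul]; exact neg_le_abs _
      have h2 : |φ i z.2.1 * s i z.1| ≤ ∑ j : ι, |φ j z.2.1 * s j z.1| :=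
        Finset.single_le_sum (f := fun j => |φ j z.2.1 * s j z.1|)
          (fun j _ => abs_nonneg _) (Finset.mem_univ i)
      linarith
    rw [fpp, Nat.card_of_isEmpty, Nat.cast_zero, zero_div]
    exact hδ

private lemma tau_nonneg {δ : ℝ} (hδ : 0 ≤ δ) (z : 𝒳 × 𝒴 × Finset ι) :
    0 ≤ sInf {lam : ℝ | 0 < lam ∧ ∀ lam' ≥ lam, fpp φ s z lam' ≤ δ} :=
  le_csInf (tset_nonempty φ s hδ z) (fun a ha => ha.1.le)

end fppLemmas

section fppLemmas2

variable {𝒳 𝒴 ι : Type*} [Fintype ι] (φ : ι → 𝒴 → ℝ) (s : ι → 𝒳 → ℝ)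

private lemma fpp_le_of_tau_le {δ : ℝ} (hδ : 0 ≤ δ) (z : 𝒳 × 𝒴 × Finset ι) {lam : ℝ}
    (h : sInf {lam : ℝ | 0 < lam ∧ ∀ lam' ≥ lam, fpp φ s z lam' ≤ δ} ≤ lam) :
    fpp φ s z lam ≤ δ := by
  set A := {lam : ℝ | 0 < lam ∧ ∀ lam' ≥ lam, fpp φ s z lam' ≤ δ} with hA
  have hne : A.Nonempty := tset_nonempty φ s hδ z
  have hbdd : BddBelow A := ⟨0, fun a ha => ha.1.le⟩
  obtain ⟨ε, hε, hconst⟩ := fpp_locally_const φ s z lam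
  have h2 : sInf A < lam + ε := lt_of_le_of_lt h (by linarith)
  obtain ⟨a, ha, halt⟩ := (csInf_lt_iff hbdd hne).mp h2
  calc fpp φ s z lam = fpp φ s z (lam + ε) :=
        (hconst (lam + ε) (by linarith) le_rfl).symm
    _ ≤ δ := ha.2 (lam + ε) halt.le

private lemma tau_le_iff {δ : ℝ} (hδ : 0 ≤ δ) (z : 𝒳 × 𝒴 × Finset ι) (t : ℝ) :
    sInf {lam : ℝ | 0 < lam ∧ ∀ lam' ≥ lam, fpp φ s z lam' ≤ δ} ≤ t ↔
      0 ≤ t ∧ ∀ q : ℚ, t < (q : ℝ) → fpp φ s z (q : ℝ) ≤ δ := by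
  constructor
  · intro h
    refine ⟨le_trans (tau_nonneg φ s hδ z) h, fun q hq => ?_⟩
    exact fpp_le_of_tau_le φ s hδ z (h.trans hq.le)
  · rintro ⟨ht, hq⟩
    refine le_of_forall_gt_imp_ge_of_dense fun u hu => ?_
    refine csInf_le ⟨0, fun a ha => ha.1.le⟩ ⟨lt_of_le_of_lt ht hu, fun lam' hl' => ?_⟩
    obtain ⟨ε, hε, hconst⟩ := fpp_locally_const φ s z lam'
    obtain ⟨q, hq1, hq2⟩ := exists_rat_btwn (show lam' < lam' + ε by linarith)
    calc fpp φ s z lam' = fpp φ s z (q : ℝ) := (hconst (q : ℝ) hq1.le hq2.le).symm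
      _ ≤ δ := hq q (lt_of_lt_of_le hu (hl'.trans hq1.le) |>.trans_le le_rfl)

variable [MeasurableSpace 𝒳] [MeasurableSpace 𝒴]
  [MeasurableSpace (Finset ι)] [MeasurableSingletonClass (Finset ι)]

private lemma measurable_fpp (hφmeas : ∀ i, Measurable (φ i))
    (hsmeas : ∀ i, Measurable (s i)) (lam : ℝ) :
    Measurable (fun z : 𝒳 × 𝒴 × Finset ι => fpp φ s z lam) := by
  classical
  have hcount : ∀ (c : ι → 𝒳 × 𝒴 × Finset ι → ℝ), (∀ i, Measurable (c i)) →
      Measurable (fun z : 𝒳 × 𝒴 × Finset ι =>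
        (Nat.card {i : ι // i ∈ z.2.2 ∧ lam < c i z} : ℝ)) := by
    intro c hc
    have heq : (fun z : 𝒳 × 𝒴 × Finset ι =>
        (Nat.card {i : ι // i ∈ z.2.2 ∧ lam < c i z} : ℝ)) =
        fun z => ∑ i : ι, if i ∈ z.2.2 ∧ lam < c i z then (1 : ℝ) else 0 := by
      funext z
      rw [natCard_eq_filter, Finset.card_filter]
      push_cast
      rfl
    rw [heq]
    apply Finset.measurable_sum
    intro i _
    have hset : MeasurableSet {z : 𝒳 × 𝒴 × Finset ι | i ∈ z.2.2 ∧ lam < c i z} := by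
      have hm1 : MeasurableSet {z : 𝒳 × 𝒴 × Finset ι | i ∈ z.2.2} := by
        have : {z : 𝒳 × 𝒴 × Finset ι | i ∈ z.2.2} =
            (fun z : 𝒳 × 𝒴 × Finset ι => z.2.2) ⁻¹' {I : Finset ι | i ∈ I} := rfl
        rw [this]
        exact (measurable_snd.snd) ((Set.to_countable _).measurableSet)
      have hm2 : MeasurableSet {z : 𝒳 × 𝒴 × Finset ι | lam < c i z} :=
        measurableSet_lt measurable_const (hc i)
      exact hm1.inter hm2
    exact Measurable.ite hset measurable_const measurable_const
  have hnum := hcount (fun i z => -(φ i z.2.1) * s i z.1) (fun i =>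
    (((hφmeas i).comp (measurable_fst.comp measurable_snd)).neg).mul
      ((hsmeas i).comp measurable_fst))
  have hden := hcount (fun i z => |s i z.1|) (fun i =>
    ((hsmeas i).comp measurable_fst).abs)
  exact hnum.div (measurable_const.max hden)

private lemma measurable_tau {δ : ℝ} (hδ : 0 ≤ δ) (hφmeas : ∀ i, Measurable (φ i))
    (hsmeas : ∀ i, Measurable (s i)) :
    Measurable (fun z : 𝒳 × 𝒴 × Finset ι =>
      sInf {lam : ℝ | 0 < lam ∧ ∀ lam' ≥ lam, fpp φ s z lam' ≤ δ}) := by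
  apply measurable_of_Iic
  intro t
  have heq : (fun z : 𝒳 × 𝒴 × Finset ι =>
      sInf {lam : ℝ | 0 < lam ∧ ∀ lam' ≥ lam, fpp φ s z lam' ≤ δ}) ⁻¹' Set.Iic t =
      {z : 𝒳 × 𝒴 × Finset ι | 0 ≤ t} ∩
        ⋂ (q : ℚ), ⋂ (_ : t < (q : ℝ)), {z : 𝒳 × 𝒴 × Finset ι | fpp φ s z (q : ℝ) ≤ δ} := by
    ext z
    simp only [Set.mem_preimage, Set.mem_Iic, Set.mem_inter_iff, Set.mem_setOf_eq,
      Set.mem_iInter]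
    exact tau_le_iff φ s hδ z t
  rw [heq]
  refine MeasurableSet.inter ?_ ?_
  · by_cases h : 0 ≤ t
    · simp only [h, Set.setOf_true]; exact MeasurableSet.univ
    · simp only [h, Set.setOf_false]; exact MeasurableSet.empty
  · exact MeasurableSet.iInter fun q => MeasurableSet.iInter fun _ =>
      measurableSet_le (measurable_fpp φ s hφmeas hsmeas _) measurable_const

end fppLemmas2

private lemma kthSmallest_mem {n : ℕ} (v : Fin n → ℝ) {k : ℕ} (hk1 : 1 ≤ k) (hkn : k ≤ n) :
    k ≤ Nat.card {j : Fin n // v j ≤ kthSmallest v k} := by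
  classical
  set U := {t : ℝ | k ≤ Nat.card {j : Fin n // v j ≤ t}} with hU
  have hn : 0 < n := lt_of_lt_of_le hk1 hkn
  have huniv : (Finset.univ : Finset (Fin n)).Nonempty := ⟨⟨0, hn⟩, Finset.mem_univ _⟩
  have hne : U.Nonempty := by
    refine ⟨Finset.univ.sup' huniv v, ?_⟩
    show k ≤ Nat.card {j : Fin n // v j ≤ Finset.univ.sup' huniv v}
    have hall : ∀ j : Fin n, v j ≤ Finset.univ.sup' huniv v :=
      fun j => Finset.le_sup' v (Finset.mem_univ j)
    rw [natCard_eq_filter]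
    rw [Finset.filter_true_of_mem (fun j _ => hall j)]
    simpa using hkn
  have hupward : ∀ a ∈ U, ∀ b, a ≤ b → b ∈ U := by
    intro a ha b hab
    simp only [hU, Set.mem_setOf_eq] at ha ⊢
    refine le_trans ha ?_
    rw [natCard_eq_filter, natCard_eq_filter]
    apply Finset.card_le_card
    intro j hj
    simp only [Finset.mem_filter, Finset.mem_univ, true_and] at hj ⊢
    linarith
  have hbdd : BddBelow U := by
    refine ⟨Finset.univ.inf' huniv v, fun t ht => ?_⟩
    by_contra hlt
    push_neg at hlt
    have hempty : (Finset.univ.filter fun j : Fin n => v j ≤ t) = ∅ := by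
      apply Finset.filter_eq_empty_iff.mpr
      intro j _
      have := Finset.inf'_le v (Finset.mem_univ j)
      push_neg
      linarith
    have := ht
    rw [hU, Set.mem_setOf_eq, natCard_eq_filter, hempty, Finset.card_empty] at this
    omega
  obtain ⟨ε, hε, hgap⟩ := exists_gap v (sInf U)
  have hmem : sInf U + ε ∈ U := by
    obtain ⟨u, hu, hult⟩ := (csInf_lt_iff hbdd hne).mp
      (show sInf U < sInf U + ε by linarith)
    exact hupward u hu _ hult.le
  have : Nat.card {j : Fin n // v j ≤ sInf U + ε} =
      Nat.card {j : Fin n // v j ≤ sInf U} :=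
    Nat.card_congr (Equiv.subtypeEquivRight fun j => hgap j)
  rw [hU, Set.mem_setOf_eq, this] at hmem
  exact hmem

open scoped ENNReal

/-- Step-down probe-based conformalization controls the `(1-α)`-value-at-risk of the
FPP loss at level `δ`. -/
theorem step_down_conformal_validity
    {Ω : Type*} [MeasurableSpace Ω] (P : Measure Ω) [IsProbabilityMeasure P]
    {𝒳 𝒴 ι : Type*} [MeasurableSpace 𝒳] [MeasurableSpace 𝒴] [Fintype ι] [Nonempty ι]
    [MeasurableSpace (Finset ι)] [MeasurableSingletonClass (Finset ι)]
    (φ : ι → 𝒴 → ℝ) (hφ : ∀ i y, φ i y = 1 ∨ φ i y = -1)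
    (hφmeas : ∀ i, Measurable (φ i))
    (s : ι → 𝒳 → ℝ) (hsmeas : ∀ i, Measurable (s i))
    (n : ℕ)
    -- the i.i.d. sample `(X_j, Y_j, I_j)` for `j = 1, …, n+1`
    (Z : Fin (n + 1) → Ω → 𝒳 × 𝒴 × Finset ι)
    (hZmeas : ∀ j, Measurable (Z j))
    (hindep : iIndepFun Z P)
    (hident : ∀ j, IdentDistrib (Z j) (Z 0) P P)
    (δ : ℝ) (hδ : 0 ≤ δ)
    (α : ℝ) (hα : α ∈ Set.Ioo (0 : ℝ) 1)
    (hk : ⌈(1 - α) * (n + 1 : ℝ)⌉₊ ≤ n)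
    -- the step-down nonconformity scores on the calibration sample
    (S : Ω → Fin n → ℝ)
    (hS : ∀ ω j, S ω j =
      sInf {lam : ℝ | 0 < lam ∧ ∀ lam' ≥ lam, fpp φ s (Z j.castSucc ω) lam' ≤ δ})
    -- the calibrated threshold: the `⌈(1-α)(n+1)⌉`-th smallest score
    (lamhat : Ω → ℝ)
    (hlamhat : ∀ ω, lamhat ω = kthSmallest (S ω) ⌈(1 - α) * (n + 1 : ℝ)⌉₊) :
    1 - α ≤ (P {ω | fpp φ s (Z (Fin.last n) ω) (lamhat ω) ≤ δ}).toReal := by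
  classical
  obtain ⟨hα0, hα1⟩ := hα
  set k := ⌈(1 - α) * (n + 1 : ℝ)⌉₊ with hkdef
  have hkpos : (0:ℝ) < (1 - α) * (n + 1 : ℝ) := by
    have : (0:ℝ) < (n:ℝ) + 1 := by positivity
    nlinarith
  have hk1 : 1 ≤ k := Nat.ceil_pos.mpr hkpos
  have hkN : k ≤ n + 1 := hk.trans (Nat.le_succ n)
  -- the score map
  set τ : 𝒳 × 𝒴 × Finset ι → ℝ := fun z =>
    sInf {lam : ℝ | 0 < lam ∧ ∀ lam' ≥ lam, fpp φ s z lam' ≤ δ} with hτdef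
  have hτmeas : Measurable τ := measurable_tau φ s hδ hφmeas hsmeas
  set W : Ω → Fin (n + 1) → ℝ := fun ω j => τ (Z j ω) with hWdef
  have hWmeas : Measurable W :=
    measurable_pi_lambda _ (fun j => hτmeas.comp (hZmeas j))
  set μ0 := P.map (fun ω => τ (Z 0 ω)) with hμ0
  haveI : IsProbabilityMeasure μ0 := by
    rw [hμ0]
    exact Measure.isProbabilityMeasure_map (hτmeas.comp (hZmeas 0)).aemeasurable
  set ν := Measure.pi (fun _ : Fin (n + 1) => μ0) with hνdef
  haveI : IsProbabilityMeasure ν := by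
    rw [hνdef]; infer_instance
  -- the joint law of the scores is the product measure
  have hTindep : iIndepFun (fun j => τ ∘ Z j) P :=
    hindep.comp (fun _ => τ) (fun _ => hτmeas)
  have hTmap : ∀ j, P.map (fun ω => τ (Z j ω)) = μ0 := fun j =>
    ((hident j).comp hτmeas).map_eq
  have hmap : P.map W = ν := by
    rw [hνdef]
    symm
    apply Measure.pi_eq
    intro sets hsets
    rw [Measure.map_apply hWmeas (MeasurableSet.univ_pi hsets)]
    have hpre : W ⁻¹' (Set.univ.pi sets) =
        ⋂ j ∈ Finset.univ, (τ ∘ Z j) ⁻¹' sets j := by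
      ext ω
      simp [hWdef, Set.mem_pi]
    rw [hpre, hTindep.measure_inter_preimage_eq_mul Finset.univ (fun j _ => hsets j)]
    refine Finset.prod_congr rfl fun j _ => ?_
    rw [show μ0 = Measure.map (fun ω => τ (Z j ω)) P from (hTmap j).symm,
      Measure.map_apply (f := fun ω => τ (Z j ω)) (hτmeas.comp (hZmeas j)) (hsets j)]
    rfl
  -- the rank events
  set A : Fin (n + 1) → Set (Fin (n + 1) → ℝ) := fun m =>
    {v | Nat.card {j : Fin (n + 1) // v j < v m} < k} with hAdef
  have hAmeas : ∀ m, MeasurableSet (A m) := by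
    intro m
    have hcnt : Measurable (fun v : Fin (n + 1) → ℝ =>
        ∑ j : Fin (n + 1), if v j < v m then (1:ℕ) else 0) := by
      apply Finset.measurable_sum
      intro j _
      exact Measurable.ite
        (measurableSet_lt (measurable_pi_apply j) (measurable_pi_apply m))
        measurable_const measurable_const
    have : A m = (fun v : Fin (n + 1) → ℝ =>
        ∑ j : Fin (n + 1), if v j < v m then (1:ℕ) else 0) ⁻¹' {x | x < k} := by
      ext v
      simp only [hAdef, Set.mem_setOf_eq, Set.mem_preimage, natCard_eq_filter,
        Finset.card_filter]
    rw [this]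
    exact hcnt ((Set.to_countable _).measurableSet)
  -- exchangeability: all rank events have the same probability
  have hswap : ∀ m, ν (A m) = ν (A (Fin.last n)) := by
    intro m
    set e : Fin (n + 1) ≃ Fin (n + 1) := Equiv.swap m (Fin.last n) with hedef
    set F := MeasurableEquiv.piCongrLeft (fun _ : Fin (n + 1) => ℝ) e with hFdef
    have hpres : ν.map F = ν := by
      rw [hνdef, hFdef]
      exact MeasureTheory.Measure.pi_map_piCongrLeft e (fun _ => μ0)
    have happ : ∀ (v : Fin (n + 1) → ℝ) (j : Fin (n + 1)), F v j = v (e.symm j) := by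
      intro v j
      conv_lhs => rw [show j = e (e.symm j) by simp]
      exact MeasurableEquiv.piCongrLeft_apply_apply (β := fun _ : Fin (n+1) => ℝ) e v (e.symm j)
    have hpreA : F ⁻¹' (A m) = A (Fin.last n) := by
      ext v
      simp only [Set.mem_preimage, hAdef, Set.mem_setOf_eq]
      have hcards : Nat.card {j : Fin (n + 1) // F v j < F v m} =
          Nat.card {j : Fin (n + 1) // v j < v (Fin.last n)} := by
        have hm : F v m = v (Fin.last n) := by
          rw [happ v m, hedef]
          simp [Equiv.symm_swap, Equiv.swap_apply_left]
        refine Nat.card_congr ?_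
        refine Equiv.subtypeEquiv e.symm (fun j => ?_)
        rw [happ v j, hm]
      rw [hcards]
    calc ν (A m) = (ν.map F) (A m) := by rw [hpres]
      _ = ν (F ⁻¹' (A m)) := Measure.map_apply F.measurable (hAmeas m)
      _ = ν (A (Fin.last n)) := by rw [hpreA]
  -- pointwise: every v lies in at least k of the events A m
  have hpoint : ∀ v : Fin (n + 1) → ℝ,
      (k : ℝ≥0∞) ≤ ∑ m : Fin (n + 1), (A m).indicator (fun _ => 1) v := by
    intro v
    have hsum : ∑ m : Fin (n + 1), (A m).indicator (fun _ => (1:ℝ≥0∞)) v =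
        ((Finset.univ.filter fun m => v ∈ A m).card : ℝ≥0∞) := by
      rw [Finset.card_filter]
      push_cast
      refine Finset.sum_congr rfl fun m _ => ?_
      rw [Set.indicator_apply]
    rw [hsum]
    have hrank := rank_count hkN v
    have hsame : (Finset.univ.filter fun m => v ∈ A m) =
        (Finset.univ.filter fun m =>
          (Finset.univ.filter fun j => v j < v m).card < k) := by
      apply Finset.filter_congr
      intro m _
      simp only [hAdef, Set.mem_setOf_eq, natCard_eq_filter]
    rw [hsame]
    exact_mod_cast hrank
  -- summing: k ≤ (n+1) · ν (A last)
  have hsum : (k : ℝ≥0∞) ≤ (n + 1 : ℕ) * ν (A (Fin.last n)) := by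
    have h1 : (k : ℝ≥0∞) ≤ ∑ m : Fin (n + 1), ν (A m) := by
      calc (k : ℝ≥0∞) = ∫⁻ _, (k : ℝ≥0∞) ∂ν := by
            rw [lintegral_const, measure_univ, mul_one]
        _ ≤ ∫⁻ v, ∑ m : Fin (n + 1), (A m).indicator (fun _ => 1) v ∂ν :=
            lintegral_mono fun v => hpoint v
        _ = ∑ m : Fin (n + 1), ∫⁻ v, (A m).indicator (fun _ => 1) v ∂ν := by
            rw [lintegral_finset_sum]
            exact fun m _ => measurable_const.indicator (hAmeas m)
        _ = ∑ m : Fin (n + 1), ν (A m) := by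
            refine Finset.sum_congr rfl fun m _ => ?_
            exact lintegral_indicator_one (hAmeas m)
    calc (k : ℝ≥0∞) ≤ ∑ m : Fin (n + 1), ν (A m) := h1
      _ = ∑ _m : Fin (n + 1), ν (A (Fin.last n)) := by
          exact Finset.sum_congr rfl fun m _ => hswap m
      _ = (n + 1 : ℕ) * ν (A (Fin.last n)) := by
          rw [Finset.sum_const, Finset.card_univ, Fintype.card_fin, nsmul_eq_mul]
  -- event inclusion
  have hsubset : W ⁻¹' (A (Fin.last n)) ⊆
      {ω | fpp φ s (Z (Fin.last n) ω) (lamhat ω) ≤ δ} := by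
    intro ω hω
    simp only [Set.mem_preimage, hAdef, Set.mem_setOf_eq] at hω
    have hkA : k ≤ Nat.card {j : Fin n // S ω j ≤ lamhat ω} := by
      rw [hlamhat ω]
      exact kthSmallest_mem (S ω) hk1 hk
    have hSW : ∀ j : Fin n, S ω j = W ω j.castSucc := by
      intro j
      rw [hS ω j]
    have hTle : W ω (Fin.last n) ≤ lamhat ω := by
      by_contra hlt
      push_neg at hlt
      have hinj : Nat.card {j : Fin n // S ω j ≤ lamhat ω} ≤
          Nat.card {j : Fin (n + 1) // W ω j < W ω (Fin.last n)} := by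
        rw [natCard_eq_filter, natCard_eq_filter]
        apply Finset.card_le_card_of_injOn (fun j => j.castSucc)
        · intro j hj
          simp only [Finset.mem_coe, Finset.mem_filter, Finset.mem_univ, true_and] at hj ⊢
          calc W ω j.castSucc = S ω j := (hSW j).symm
            _ ≤ lamhat ω := hj
            _ < W ω (Fin.last n) := hlt
        · intro a _ b _ hab
          exact Fin.castSucc_injective _ hab
      omega
    exact fpp_le_of_tau_le φ s hδ _ hTle
  -- putting it together
  have hPE : P (W ⁻¹' (A (Fin.last n))) = ν (A (Fin.last n)) := by
    rw [← hmap, Measure.map_apply hWmeas (hAmeas _)]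
  have hmono : P (W ⁻¹' (A (Fin.last n))) ≤
      P {ω | fpp φ s (Z (Fin.last n) ω) (lamhat ω) ≤ δ} := measure_mono hsubset
  -- numeric conclusion
  set x := ν (A (Fin.last n)) with hxdef
  have hxle : x ≤ 1 := prob_le_one
  have hxne : x ≠ ⊤ := (hxle.trans_lt ENNReal.one_lt_top).ne
  have hract : (k : ℝ) ≤ (n + 1 : ℝ) * x.toReal := by
    have := ENNReal.toReal_mono (by
        exact ENNReal.mul_ne_top (by simp) hxne) hsum
    rw [ENNReal.toReal_mul] at this
    simpa [ENNReal.toReal_add] using this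
  have hkreal : (1 - α) * (n + 1 : ℝ) ≤ (k : ℝ) := Nat.le_ceil _
  have hx1a : 1 - α ≤ x.toReal := by
    have hn1 : (0:ℝ) < (n + 1 : ℝ) := by positivity
    nlinarith
  have hfinal : x.toReal ≤
      (P {ω | fpp φ s (Z (Fin.last n) ω) (lamhat ω) ≤ δ}).toReal := by
    rw [← hPE]
    exact ENNReal.toReal_mono (measure_ne_top P _) hmono
  linarith
end

section
/- Fix δ ∈ (0,1), α_FST ∈ (0,1), and a finite grid 0 < λ_1 < ⋯ < λ_N. Define the risk r(λ) := E[ L(X, Y, I, λ) ], where (X, Y, I) has the common distribution of the sample, and for each k ∈ {1,…,N} let the null hypothesis be H_k : r(λ_k) > δ. Suppose p_1, …, p_N are random variables, each a measurable function of the calibration sample (X_1, Y_1, I_1), …, (X_n, Y_n, I_n), such that whenever H_k holds, ℙ(p_k ≤ u) ≤ u for all u ∈ [0,1]. Let k̂ := min{k : p_{k'} ≤ α_FST for all k' ≥ k} (with k̂ := N+1 if no such k exists). Then ℙ( k̂ ≤ N and r(λ_{k̂}) > δ ) ≤ α_FST; equivalently, with probability at least 1 − α_FST over the calibration sample, either the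 procedure abstains or the returned predictive set mapping Ĉ_n = C^s_{λ_{k̂}} satisfies E[ L(X_{n+1}, Y_{n+1}, I_{n+1}, λ_{k̂}) | k̂ ] ≤ δ. -/
open MeasureTheory ProbabilityTheory Set
open scoped Classical

/-- Fixed sequence testing for weakly supervised predictive inference: with probability at
least `1 - α_FST`, either the procedure abstains (`k̂ = N+1`) or the selected threshold
`λ_{k̂}` has expected FPP loss at most `δ` on a fresh sample. -/
theorem fixed_sequence_testing_risk_control
    {Ω : Type*} [MeasurableSpace Ω] (P : Measure Ω) [IsProbabilityMeasure P]
    {𝒳 𝒴 ι : Type*} [MeasurableSpace 𝒳] [MeasurableSpace 𝒴] [Fintype ι] [Nonempty ι]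
    [MeasurableSpace (Finset ι)] [MeasurableSingletonClass (Finset ι)]
    (φ : ι → 𝒴 → ℝ) (hφ : ∀ i y, φ i y = 1 ∨ φ i y = -1)
    (hφmeas : ∀ i, Measurable (φ i))
    (s : ι → 𝒳 → ℝ) (hsmeas : ∀ i, Measurable (s i))
    (n : ℕ)
    -- the i.i.d. sample `(X_j, Y_j, I_j)` for `j = 1, …, n+1`
    (Z : Fin (n + 1) → Ω → 𝒳 × 𝒴 × Finset ι)
    (hZmeas : ∀ j, Measurable (Z j))
    (hindep : iIndepFun Z P)
    (hident : ∀ j, IdentDistrib (Z j) (Z 0) P P)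
    (δ : ℝ) (hδ : δ ∈ Set.Ioo (0 : ℝ) 1)
    (αFST : ℝ) (hαFST : αFST ∈ Set.Ioo (0 : ℝ) 1)
    -- the finite grid `0 < λ_1 < ⋯ < λ_N`
    (N : ℕ) (hN : 1 ≤ N) (lam : ℕ → ℝ) (hlam1 : 0 < lam 1)
    (hlammono : ∀ k, 1 ≤ k → k + 1 ≤ N → lam k < lam (k + 1))
    -- the risk `r(λ) = E[L(X, Y, I, λ)]` under the common distribution of the sample
    (r : ℝ → ℝ)
    (hr : ∀ l, r l = ∫ ω, fpp φ s (Z (Fin.last n) ω) l ∂P)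
    -- p-values, each a measurable function of the calibration sample
    (p : ℕ → Ω → ℝ)
    (hpmeas : ∀ k, 1 ≤ k → k ≤ N →
      Measurable[MeasurableSpace.comap (fun ω (j : Fin n) => Z j.castSucc ω) inferInstance]
        (p k))
    -- validity: whenever `H_k : r(λ_k) > δ` holds, `p_k` is a valid p-value
    (hpvalid : ∀ k, 1 ≤ k → k ≤ N → δ < r (lam k) →
      ∀ u ∈ Set.Icc (0 : ℝ) 1, (P {ω | p k ω ≤ u}).toReal ≤ u)
    -- the fixed-sequence-testing selection, with the convention `k̂ = N + 1` when no
    -- index qualifies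
    (khat : Ω → ℕ)
    (hkhat : ∀ ω, khat ω =
      if ({k : ℕ | 1 ≤ k ∧ k ≤ N ∧ ∀ k', k ≤ k' → k' ≤ N → p k' ω ≤ αFST}).Nonempty then
        sInf {k : ℕ | 1 ≤ k ∧ k ≤ N ∧ ∀ k', k ≤ k' → k' ≤ N → p k' ω ≤ αFST}
      else N + 1) :
    (P {ω | khat ω ≤ N ∧ δ < r (lam (khat ω))}).toReal ≤ αFST := by
  set S : Set ℕ := {k | 1 ≤ k ∧ k ≤ N ∧ δ < r (lam k)} with hS
  by_cases hSne : S.Nonempty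
  · -- K : largest null hypothesis index
    have hbdd : BddAbove S := ⟨N, fun k hk => hk.2.1⟩
    set K := sSup S with hK
    have hKmem : K ∈ S := Nat.sSup_mem hSne hbdd
    -- the bad event is contained in {p K ≤ αFST}
    have hsub : {ω | khat ω ≤ N ∧ δ < r (lam (khat ω))} ⊆ {ω | p K ω ≤ αFST} := by
      intro ω hω
      obtain ⟨h1, h2⟩ := hω
      have hk := hkhat ω
      set T : Set ℕ := {k : ℕ | 1 ≤ k ∧ k ≤ N ∧ ∀ k', k ≤ k' → k' ≤ N → p k' ω ≤ αFST}
        with hT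
      by_cases hTne : T.Nonempty
      · rw [if_pos hTne] at hk
        have hmem : khat ω ∈ T := by rw [hk]; exact Nat.sInf_mem hTne
        have hkS : khat ω ∈ S := ⟨hmem.1, h1, h2⟩
        have hle : khat ω ≤ K := le_csSup hbdd hkS
        exact hmem.2.2 K hle hKmem.2.1
      · rw [if_neg hTne] at hk
        omega
    have h1 : P {ω | khat ω ≤ N ∧ δ < r (lam (khat ω))} ≤ P {ω | p K ω ≤ αFST} :=
      measure_mono hsub
    have h2 : (P {ω | p K ω ≤ αFST}).toReal ≤ αFST :=
      hpvalid K hKmem.1 hKmem.2.1 hKmem.2.2 αFST ⟨hαFST.1.le, hαFST.2.le⟩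
    refine le_trans (ENNReal.toReal_mono (measure_ne_top _ _) h1) h2
  · -- no null hypothesis: the bad event is empty
    have hempty : {ω | khat ω ≤ N ∧ δ < r (lam (khat ω))} = ∅ := by
      ext ω
      simp only [Set.mem_setOf_eq, Set.mem_empty_iff_false, iff_false, not_and]
      intro h1 h2
      have hk := hkhat ω
      by_cases hTne :
          ({k : ℕ | 1 ≤ k ∧ k ≤ N ∧ ∀ k', k ≤ k' → k' ≤ N → p k' ω ≤ αFST}).Nonempty
      · rw [if_pos hTne] at hk
        have hmem := Nat.sInf_mem hTne
        rw [← hk] at hmem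
        exact hSne ⟨khat ω, hmem.1, h1, h2⟩
      · rw [if_neg hTne] at hk; omega
    rw [hempty]
    simp [hαFST.1.le]
end

section
/- (Hoeffding component of the Hoeffding–Bentkus p-value) Suppose μ > δ. Then p^H := exp(−n·h(min(L̄, δ), δ)) is a valid p-value for the hypothesis H : μ > δ, i.e. for every u ∈ [0,1], ℙ( p^H ≤ u ) ≤ u. -/
open MeasureTheory ProbabilityTheory Set

/-- The relative entropy `h(a, b) = a log(a/b) + (1-a) log((1-a)/(1-b))` between Bernoulli
distributions with parameters `a` and `b` (with the conventions `h(0,b) = log(1/(1-b))`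
and `h(1,b) = log(1/b)`, automatic here since `Real.log 0 = 0`). -/
noncomputable def bernoulliKL (a b : ℝ) : ℝ :=
  a * Real.log (a / b) + (1 - a) * Real.log ((1 - a) / (1 - b))

/-- A globally continuous version of `a ↦ bernoulliKL a δ`. -/
noncomputable def gKL (δ a : ℝ) : ℝ :=
  a * Real.log a - a * Real.log δ + ((1 - a) * Real.log (1 - a) - (1 - a) * Real.log (1 - δ))

lemma gKL_continuous (δ : ℝ) : Continuous (gKL δ) := by
  unfold gKL
  have h1 : Continuous fun a : ℝ => a * Real.log a := Real.continuous_mul_log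
  have h2 : Continuous fun a : ℝ => (1 - a) * Real.log (1 - a) :=
    Real.continuous_mul_log.comp (continuous_const.sub continuous_id)
  fun_prop

lemma gKL_strictAntiOn {δ : ℝ} (hδ0 : 0 < δ) (hδ1 : δ < 1) :
    StrictAntiOn (gKL δ) (Set.Icc 0 δ) := by
  apply strictAntiOn_of_deriv_neg (convex_Icc 0 δ) (gKL_continuous δ).continuousOn
  intro x hx
  rw [interior_Icc] at hx
  obtain ⟨hx0, hxδ⟩ := hx
  have hx1 : x < 1 := hxδ.trans hδ1
  have hd : HasDerivAt (gKL δ)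
      ((Real.log x + 1) - Real.log δ + ((Real.log (1 - x) + 1) * (0 - 1)
        - (0 - 1) * Real.log (1 - δ))) x := by
    have d1 : HasDerivAt (fun a : ℝ => a * Real.log a) (Real.log x + 1) x :=
      Real.hasDerivAt_mul_log hx0.ne'
    have d2 : HasDerivAt (fun a : ℝ => a * Real.log δ) (Real.log δ) x := by
      simpa using (hasDerivAt_id x).mul_const (Real.log δ)
    have dlin : HasDerivAt (fun a : ℝ => 1 - a) (0 - 1) x :=
      (hasDerivAt_const x 1).sub (hasDerivAt_id x)
    have d3 : HasDerivAt (fun a : ℝ => (1 - a) * Real.log (1 - a))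
        ((Real.log (1 - x) + 1) * (0 - 1)) x :=
      (Real.hasDerivAt_mul_log (by linarith : (1:ℝ) - x ≠ 0)).comp x dlin
    have d4 : HasDerivAt (fun a : ℝ => (1 - a) * Real.log (1 - δ))
        ((0 - 1) * Real.log (1 - δ)) x := dlin.mul_const _
    exact ((d1.sub d2).add (d3.sub d4))
  rw [hd.deriv]
  have l1 : Real.log x < Real.log δ := Real.log_lt_log hx0 hxδ
  have l2 : Real.log (1 - δ) < Real.log (1 - x) :=
    Real.log_lt_log (by linarith) (by linarith)
  nlinarith [l1, l2]

lemma bernoulliKL_eq_gKL {δ a : ℝ} (hδ0 : 0 < δ) (hδ1 : δ < 1) (ha0 : 0 ≤ a) (ha1 : a < 1) :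
    bernoulliKL a δ = gKL δ a := by
  unfold bernoulliKL gKL
  have h2 : Real.log ((1 - a) / (1 - δ)) = Real.log (1 - a) - Real.log (1 - δ) :=
    Real.log_div (by linarith) (by linarith)
  rcases eq_or_lt_of_le ha0 with h | h
  · simp [← h, h2]
  · rw [h2, Real.log_div h.ne' hδ0.ne']; ring

lemma gKL_self {δ : ℝ} : gKL δ δ = 0 := by unfold gKL; ring

lemma chernoff_lambda {Ω : Type*} [MeasurableSpace Ω] (P : Measure Ω) [IsProbabilityMeasure P]
    (n : ℕ) (L : Fin n → Ω → ℝ) (hLmeas : ∀ j, Measurable (L j))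
    (hL01 : ∀ j ω, L j ω ∈ Set.Icc (0 : ℝ) 1)
    (hindep : iIndepFun L P)
    (μ : ℝ) (hμint : ∀ j, ∫ ω, L j ω ∂P = μ)
    (δ : ℝ) (hμδ : δ ≤ μ) (hμ1 : μ ≤ 1) (hμ0 : 0 ≤ μ)
    (t lam : ℝ) (hlam : lam ≤ 0) :
    (P {ω | ∑ j, L j ω ≤ (n : ℝ) * t}).toReal ≤
      Real.exp (-lam * ((n : ℝ) * t)) * (1 - δ + δ * Real.exp lam) ^ n := by
  have hexp1 : ∀ (f : Ω → ℝ), (∀ ω, 0 ≤ f ω) → Measurable f →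
      Integrable (fun ω => Real.exp (lam * f ω)) P := by
    intro f hf hfm
    refine Integrable.mono' (integrable_const 1) ((hfm.const_mul lam).exp).aestronglyMeasurable
      (ae_of_all _ fun ω => ?_)
    rw [Real.norm_eq_abs, abs_of_pos (Real.exp_pos _)]
    exact Real.exp_le_one_iff.mpr (mul_nonpos_of_nonpos_of_nonneg hlam (hf ω))
  have hintj : ∀ j, Integrable (fun ω => Real.exp (lam * L j ω)) P :=
    fun j => hexp1 (L j) (fun ω => (hL01 j ω).1) (hLmeas j)
  have hsum_meas : Measurable (fun ω => ∑ j, L j ω) := by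
    exact Finset.measurable_sum _ fun j _ => hLmeas j
  have hint_sum : Integrable (fun ω => Real.exp (lam * ∑ j, L j ω)) P :=
    hexp1 _ (fun ω => Finset.sum_nonneg fun j _ => (hL01 j ω).1) hsum_meas
  have hch := measure_le_le_exp_mul_mgf (X := fun ω => ∑ j, L j ω) (μ := P)
    ((n : ℝ) * t) hlam hint_sum
  have hXsum : (fun ω => ∑ j, L j ω) = ∑ j, L j := by
    funext ω; simp [Finset.sum_apply]
  have hmgf : mgf (fun ω => ∑ j, L j ω) P lam = ∏ j, mgf (L j) P lam := by
    rw [hXsum]; exact hindep.mgf_sum hLmeas Finset.univ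
  have hperv : ∀ j, mgf (L j) P lam ≤ 1 - μ + μ * Real.exp lam := by
    intro j
    have hintL : Integrable (L j) P := by
      refine Integrable.mono' (integrable_const 1) (hLmeas j).aestronglyMeasurable
        (ae_of_all _ fun ω => ?_)
      rw [Real.norm_eq_abs, abs_of_nonneg (hL01 j ω).1]; exact (hL01 j ω).2
    have hpt : ∀ ω, Real.exp (lam * L j ω) ≤ 1 - L j ω + L j ω * Real.exp lam := by
      intro ω
      obtain ⟨h0, h1⟩ := hL01 j ω
      have := convexOn_exp.2 (Set.mem_univ (0 : ℝ)) (Set.mem_univ lam)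
        (by linarith : (0:ℝ) ≤ 1 - L j ω) h0 (by ring)
      simp only [smul_eq_mul, mul_zero, zero_add, Real.exp_zero, mul_one] at this
      rwa [mul_comm (L j ω) lam] at this
    have hint2 : Integrable (fun ω => 1 - L j ω + L j ω * Real.exp lam) P :=
      ((integrable_const 1).sub hintL).add (hintL.mul_const _)
    calc mgf (L j) P lam = ∫ ω, Real.exp (lam * L j ω) ∂P := rfl
      _ ≤ ∫ ω, (1 - L j ω + L j ω * Real.exp lam) ∂P := integral_mono (hintj j) hint2 hpt
      _ = 1 - μ + μ * Real.exp lam := by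
          have h1 : Integrable (fun ω => 1 - L j ω) P := (integrable_const 1).sub hintL
          have h2 : Integrable (fun ω => L j ω * Real.exp lam) P := hintL.mul_const _
          rw [integral_add h1 h2, integral_sub (integrable_const 1) hintL,
            integral_mul_const, hμint j]
          simp
  have hbase0 : (0:ℝ) ≤ 1 - μ + μ * Real.exp lam := by
    nlinarith [Real.exp_pos lam]
  have hexp_le : Real.exp lam ≤ 1 := Real.exp_le_one_iff.mpr hlam
  have hbase : 1 - μ + μ * Real.exp lam ≤ 1 - δ + δ * Real.exp lam := by nlinarith
  have hprod : ∏ j, mgf (L j) P lam ≤ (1 - δ + δ * Real.exp lam) ^ n := by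
    calc ∏ j, mgf (L j) P lam ≤ ∏ _j : Fin n, (1 - δ + δ * Real.exp lam) :=
          Finset.prod_le_prod (fun j _ => mgf_nonneg) (fun j _ => (hperv j).trans hbase)
      _ = (1 - δ + δ * Real.exp lam) ^ n := by
          rw [Finset.prod_const, Finset.card_univ, Fintype.card_fin]
  calc (P {ω | ∑ j, L j ω ≤ (n : ℝ) * t}).toReal
      ≤ Real.exp (-lam * ((n : ℝ) * t)) * mgf (fun ω => ∑ j, L j ω) P lam := hch
    _ ≤ Real.exp (-lam * ((n : ℝ) * t)) * (1 - δ + δ * Real.exp lam) ^ n := by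
        rw [hmgf]
        exact mul_le_mul_of_nonneg_left hprod (Real.exp_pos _).le

open Filter in
lemma chernoff_opt' {c : ℝ} {n : ℕ} {δ t : ℝ} (hδ0 : 0 < δ) (hδ1 : δ < 1)
    (ht0 : 0 ≤ t) (htδ : t ≤ δ)
    (hbd : ∀ lam : ℝ, lam ≤ 0 →
      c ≤ Real.exp (-lam * ((n : ℝ) * t)) * (1 - δ + δ * Real.exp lam) ^ n) :
    c ≤ Real.exp (-(n : ℝ) * gKL δ t) := by
  have ht1 : t < 1 := lt_of_le_of_lt htδ hδ1
  rcases eq_or_lt_of_le ht0 with h0 | h0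
  · subst h0
    have hg : gKL δ 0 = -Real.log (1 - δ) := by simp [gKL]
    rw [hg]
    have hlim : Tendsto (fun lam : ℝ =>
        Real.exp (-lam * ((n : ℝ) * 0)) * (1 - δ + δ * Real.exp lam) ^ n) atBot
        (nhds ((1 - δ) ^ n)) := by
      have h1 : Tendsto (fun lam : ℝ => 1 - δ + δ * Real.exp lam) atBot
          (nhds (1 - δ + δ * 0)) :=
        tendsto_const_nhds.add (tendsto_const_nhds.mul Real.tendsto_exp_atBot)
      simpa using (h1.pow n)
    have hbd' : ∀ᶠ lam in (atBot : Filter ℝ),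
        c ≤ Real.exp (-lam * ((n : ℝ) * 0)) * (1 - δ + δ * Real.exp lam) ^ n :=
      eventually_atBot.mpr ⟨0, fun lam hl => hbd lam hl⟩
    have := ge_of_tendsto hlim hbd'
    calc c ≤ (1 - δ) ^ n := this
      _ = Real.exp (-(n:ℝ) * -Real.log (1 - δ)) := by
          rw [neg_mul_neg, Real.exp_nat_mul, Real.exp_log (by linarith)]
  · set r : ℝ := t * (1 - δ) / ((1 - t) * δ) with hr
    have hrpos : 0 < r := by
      apply div_pos <;> nlinarith
    have hr1 : r ≤ 1 := by
      rw [div_le_one (by nlinarith)]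
      nlinarith
    set lam := Real.log r with hlam
    have hlam0 : lam ≤ 0 := Real.log_nonpos hrpos.le hr1
    have hexplam : Real.exp lam = r := Real.exp_log hrpos
    have hbase : 1 - δ + δ * Real.exp lam = (1 - δ) / (1 - t) := by
      have hδne : δ ≠ 0 := hδ0.ne'
      have h1t : (1:ℝ) - t ≠ 0 := by linarith
      rw [hexplam, hr]; field_simp; ring
    have key := hbd lam hlam0
    rw [hbase] at key
    refine key.trans (le_of_eq ?_)
    have hq : (0:ℝ) < (1 - δ) / (1 - t) := by apply div_pos <;> linarith
    have hpow : ((1 - δ) / (1 - t)) ^ n = Real.exp ((n : ℝ) * Real.log ((1 - δ) / (1 - t))) := by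
      rw [Real.exp_nat_mul, Real.exp_log hq]
    rw [hpow, ← Real.exp_add]
    congr 1
    have hlr : lam = Real.log t + Real.log (1 - δ) - (Real.log (1 - t) + Real.log δ) := by
      rw [hlam, hr, Real.log_div (ne_of_gt (by nlinarith : (0:ℝ) < t * (1 - δ)))
        (ne_of_gt (by nlinarith : (0:ℝ) < (1 - t) * δ)),
        Real.log_mul h0.ne' (by linarith), Real.log_mul (by linarith) hδ0.ne']
    have hlq : Real.log ((1 - δ) / (1 - t)) = Real.log (1 - δ) - Real.log (1 - t) :=
      Real.log_div (by linarith) (by linarith)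
    rw [hlr, hlq]
    unfold gKL
    ring

/-- The Hoeffding component `p^H = exp(−n·h(L̄ ∧ δ, δ))` of the Hoeffding–Bentkus p-value
is a valid p-value for the hypothesis `H : μ > δ`. -/
theorem hoeffding_p_value_valid
    {Ω : Type*} [MeasurableSpace Ω] (P : Measure Ω) [IsProbabilityMeasure P]
    (n : ℕ) (hn : 1 ≤ n)
    (L : Fin n → Ω → ℝ)
    (hLmeas : ∀ j, Measurable (L j))
    (hL01 : ∀ j ω, L j ω ∈ Set.Icc (0 : ℝ) 1)
    (hindep : iIndepFun L P)
    (hident : ∀ j, IdentDistrib (L j) (L ⟨0, hn⟩) P P)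
    (μ : ℝ) (hμ : μ = ∫ ω, L ⟨0, hn⟩ ω ∂P)
    (δ : ℝ) (hδ : δ ∈ Set.Ioo (0 : ℝ) 1)
    (hμδ : δ < μ)
    (Lbar : Ω → ℝ) (hLbar : ∀ ω, Lbar ω = (1 / n : ℝ) * ∑ j, L j ω)
    (pH : Ω → ℝ)
    (hpH : ∀ ω, pH ω = Real.exp (-(n : ℝ) * bernoulliKL (min (Lbar ω) δ) δ)) :
    ∀ u ∈ Set.Icc (0 : ℝ) 1, (P {ω | pH ω ≤ u}).toReal ≤ u := by
  obtain ⟨hδ0, hδ1⟩ := hδ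
  intro u hu
  obtain ⟨hu0, hu1⟩ := hu
  have hn0 : (0:ℝ) < (n:ℝ) := by exact_mod_cast hn
  -- trivial cases
  rcases eq_or_lt_of_le hu0 with h0 | hu0'
  · -- u = 0
    have : {ω | pH ω ≤ u} = ∅ := by
      ext ω
      simp only [Set.mem_setOf_eq, Set.mem_empty_iff_false, iff_false, not_le, ← h0]
      rw [hpH ω]; exact Real.exp_pos _
    rw [this]; simp [← h0]
  rcases eq_or_lt_of_le hu1 with h1 | hu1'
  · -- u = 1
    have hb : (P {ω | pH ω ≤ u}).toReal ≤ 1 := by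
      calc (P {ω | pH ω ≤ u}).toReal ≤ (P Set.univ).toReal :=
            ENNReal.toReal_mono (measure_ne_top _ _) (measure_mono (Set.subset_univ _))
        _ = 1 := by simp
    rw [h1] at hb ⊢
    exact hb
  -- main case 0 < u < 1
  have hμint : ∀ j, ∫ ω, L j ω ∂P = μ := fun j => by rw [(hident j).integral_eq, ← hμ]
  have hintL0 : Integrable (L ⟨0, hn⟩) P := by
    refine Integrable.mono' (integrable_const 1) (hLmeas _).aestronglyMeasurable
      (ae_of_all _ fun ω => ?_)
    rw [Real.norm_eq_abs, abs_of_nonneg (hL01 _ ω).1]; exact (hL01 _ ω).2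
  have hμ0 : 0 ≤ μ := hμ ▸ integral_nonneg fun ω => (hL01 _ ω).1
  have hμ1 : μ ≤ 1 := by
    rw [hμ]
    calc ∫ ω, L ⟨0, hn⟩ ω ∂P ≤ ∫ _ω, (1:ℝ) ∂P :=
          integral_mono hintL0 (integrable_const 1) fun ω => (hL01 _ ω).2
      _ = 1 := by simp
  set c : ℝ := -Real.log u / n with hc
  have hlogu : Real.log u < 0 := Real.log_neg hu0' hu1'
  have hc0 : 0 < c := div_pos (by linarith) hn0
  have hLbar0 : ∀ ω, 0 ≤ Lbar ω := by
    intro ω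
    rw [hLbar ω]
    exact mul_nonneg (by positivity) (Finset.sum_nonneg fun j _ => (hL01 j ω).1)
  have hminmem : ∀ ω, min (Lbar ω) δ ∈ Set.Icc (0:ℝ) δ :=
    fun ω => ⟨le_min (hLbar0 ω) hδ0.le, min_le_right _ _⟩
  have hiff : ∀ ω, pH ω ≤ u ↔ c ≤ gKL δ (min (Lbar ω) δ) := by
    intro ω
    rw [hpH ω, bernoulliKL_eq_gKL hδ0 hδ1 (hminmem ω).1
      (lt_of_le_of_lt (hminmem ω).2 hδ1)]
    set K := gKL δ (min (Lbar ω) δ)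
    rw [show u = Real.exp (Real.log u) from (Real.exp_log hu0').symm, Real.exp_le_exp, hc,
      div_le_iff₀ hn0]
    constructor <;> intro h <;> nlinarith
  by_cases hcg : c ≤ gKL δ 0
  · -- intermediate value: find the threshold t*
    have hIVT := intermediate_value_Icc' hδ0.le (gKL_continuous δ).continuousOn
      (a := 0) (b := δ)
    have hcmem : c ∈ Set.Icc (gKL δ δ) (gKL δ 0) := by
      rw [gKL_self]; exact ⟨hc0.le, hcg⟩
    obtain ⟨ts, hts, hgts⟩ := hIVT hcmem
    have htsδ : ts < δ := by
      rcases eq_or_lt_of_le hts.2 with h | h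
      · exfalso; rw [h, gKL_self] at hgts; linarith
      · exact h
    have hsub : {ω | pH ω ≤ u} ⊆ {ω | ∑ j, L j ω ≤ (n : ℝ) * ts} := by
      intro ω hω
      have h2 : c ≤ gKL δ (min (Lbar ω) δ) := (hiff ω).mp hω
      have hmin_le : min (Lbar ω) δ ≤ ts := by
        by_contra hcon
        push_neg at hcon
        have := gKL_strictAntiOn hδ0 hδ1 hts (hminmem ω) hcon
        rw [hgts] at this
        linarith
      have hLb : Lbar ω ≤ ts := by
        rcases min_cases (Lbar ω) δ with ⟨he, _⟩ | ⟨he, hlt⟩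
        · rwa [he] at hmin_le
        · rw [he] at hmin_le; linarith
      rw [Set.mem_setOf_eq]
      have : (n : ℝ) * Lbar ω = ∑ j, L j ω := by
        rw [hLbar ω]
        field_simp
      rw [← this]
      exact mul_le_mul_of_nonneg_left hLb hn0.le
    have hmono : (P {ω | pH ω ≤ u}).toReal ≤ (P {ω | ∑ j, L j ω ≤ (n : ℝ) * ts}).toReal :=
      ENNReal.toReal_mono (measure_ne_top _ _) (measure_mono hsub)
    have hcher : (P {ω | ∑ j, L j ω ≤ (n : ℝ) * ts}).toReal ≤ Real.exp (-(n:ℝ) * gKL δ ts) :=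
      chernoff_opt' hδ0 hδ1 hts.1 hts.2 fun lam hlam =>
        chernoff_lambda P n L hLmeas hL01 hindep μ hμint δ hμδ.le hμ1 hμ0 ts lam hlam
    have hfinal : Real.exp (-(n:ℝ) * gKL δ ts) = u := by
      rw [hgts, hc]
      have : -(n:ℝ) * (-Real.log u / n) = Real.log u := by field_simp
      rw [this, Real.exp_log hu0']
    linarith [hmono, hcher, hfinal.le, hfinal.ge]
  · -- c > gKL δ 0 : the event is empty
    push_neg at hcg
    have : {ω | pH ω ≤ u} = ∅ := by
      ext ω
      simp only [Set.mem_setOf_eq, Set.mem_empty_iff_false, iff_false]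
      intro hω
      have h2 : c ≤ gKL δ (min (Lbar ω) δ) := (hiff ω).mp hω
      have h3 : gKL δ (min (Lbar ω) δ) ≤ gKL δ 0 :=
        (gKL_strictAntiOn hδ0 hδ1).antitoneOn ⟨le_refl 0, hδ0.le⟩ (hminmem ω) (hminmem ω).1
      linarith
    rw [this]
    simp
    linarith
end

section
/- (Bentkus component of the Hoeffding–Bentkus p-value) Suppose μ > δ. Then p^B := e·ℙ(Bin(n,δ) ≤ ⌈n·L̄⌉) is a valid p-value for the hypothesis H : μ > δ, i.e. for every u ∈ [0,1], ℙ( p^B ≤ u ) ≤ u. -/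
open MeasureTheory ProbabilityTheory Set

/-- `ℙ(Bin(n, δ) ≤ m)`, the cumulative distribution function of a Binomial(n, δ) random
variable evaluated at `m`. -/
noncomputable def binomCDF (n : ℕ) (δ : ℝ) (m : ℕ) : ℝ :=
  ∑ k ∈ Finset.range (m + 1), (n.choose k : ℝ) * δ ^ k * (1 - δ) ^ (n - k)

/-- expectation of `(h - B)₊` for `B ~ Bin(c, q)`. -/
noncomputable def bentW (c : ℕ) (q : ℝ) (h : ℝ) : ℝ :=
  ∑ k ∈ Finset.range (c + 1), (c.choose k : ℝ) * q ^ k * (1 - q) ^ (c - k) * max (h - k) 0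

lemma maxConvex (a x : ℝ) (h0 : 0 ≤ x) (h1 : x ≤ 1) :
    max (a - x) 0 ≤ (1 - x) * max a 0 + x * max (a - 1) 0 := by
  rcases max_cases (a - x) 0 with ⟨e1, i1⟩ | ⟨e1, i1⟩ <;>
  rcases max_cases a 0 with ⟨e2, i2⟩ | ⟨e2, i2⟩ <;>
  rcases max_cases (a - 1) 0 with ⟨e3, i3⟩ | ⟨e3, i3⟩ <;>
  rw [e1, e2, e3] <;> nlinarith

lemma bentW_succ (c : ℕ) (q h : ℝ) :
    bentW (c + 1) q h = (1 - q) * bentW c q h + q * bentW c q (h - 1) := by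
  conv_lhs => rw [bentW]
  rw [Finset.sum_range_succ' (fun k => ((c+1).choose k : ℝ) * q ^ k * (1 - q) ^ (c + 1 - k) * max (h - k) 0)]
  have hsplit : ∀ k ∈ Finset.range (c + 1),
      ((c+1).choose (k+1) : ℝ) * q ^ (k+1) * (1 - q) ^ (c + 1 - (k+1)) * max (h - (k+1 : ℕ)) 0
      = q * ((c.choose k : ℝ) * q ^ k * (1 - q) ^ (c - k) * max ((h-1) - k) 0)
        + (c.choose (k+1) : ℝ) * q ^ (k+1) * (1 - q) ^ (c - k) * max (h - (k+1 : ℕ)) 0 := by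
    intro k hk
    rw [Nat.choose_succ_succ c k, Nat.succ_sub_succ]
    have h2 : (h - 1) - (k : ℝ) = h - ((k : ℕ) + 1 : ℕ) := by push_cast; ring
    rw [h2]
    push_cast
    ring
  rw [Finset.sum_congr rfl hsplit, Finset.sum_add_distrib, add_assoc]
  have eA : ∑ k ∈ Finset.range (c+1), q * ((c.choose k : ℝ) * q ^ k * (1 - q) ^ (c - k) * max ((h-1) - k) 0)
      = q * bentW c q (h-1) := by
    rw [bentW, Finset.mul_sum]
  have eB : (∑ k ∈ Finset.range (c+1), (c.choose (k+1) : ℝ) * q ^ (k+1) * (1 - q) ^ (c - k) * max (h - (k+1 : ℕ)) 0)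
        + ((c+1).choose 0 : ℝ) * q ^ 0 * (1 - q) ^ (c + 1 - 0) * max (h - (0 : ℕ)) 0
      = (1 - q) * bentW c q h := by
    rw [Finset.sum_range_succ, Nat.choose_succ_self]
    push_cast [bentW]
    rw [Finset.mul_sum]
    rw [Finset.sum_range_succ' (fun k => (1 - q) * ((c.choose k : ℝ) * q ^ k * (1 - q) ^ (c - k) * max (h - k) 0))]
    simp only [Nat.cast_zero, pow_zero, Nat.choose_zero_right, Nat.cast_one, Nat.sub_zero,
      mul_zero, zero_mul, add_zero, sub_zero]
    congr 1
    · apply Finset.sum_congr rfl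
      intro k hk
      simp only [Finset.mem_range] at hk
      have h1 : c - k = c - (k+1) + 1 := by omega
      rw [h1]
      push_cast
      ring
    · ring
  rw [eB, eA, add_comm]

section CDF
variable {n : ℕ} {q : ℝ}

lemma binomCDF_succ (n : ℕ) (q : ℝ) (m : ℕ) :
    binomCDF n q (m + 1) = binomCDF n q m + (n.choose (m+1) : ℝ) * q ^ (m+1) * (1 - q) ^ (n - (m+1)) := by
  rw [binomCDF, binomCDF, Finset.sum_range_succ]

lemma term_nonneg (h0 : 0 ≤ q) (h1 : q ≤ 1) (k : ℕ) :
    0 ≤ (n.choose k : ℝ) * q ^ k * (1 - q) ^ (n - k) := by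
  apply mul_nonneg (mul_nonneg (by positivity) (by positivity))
  have : (0:ℝ) ≤ 1 - q := by linarith
  positivity

lemma binomCDF_nonneg (h0 : 0 ≤ q) (h1 : q ≤ 1) (m : ℕ) : 0 ≤ binomCDF n q m :=
  Finset.sum_nonneg fun k _ => term_nonneg h0 h1 k

lemma binomCDF_pos (h0 : 0 ≤ q) (h1 : q < 1) (m : ℕ) : 0 < binomCDF n q m := by
  have h1' : q ≤ 1 := h1.le
  apply lt_of_lt_of_le _ (Finset.single_le_sum (fun k _ => term_nonneg h0 h1' k)
    (Finset.mem_range.mpr (Nat.succ_pos m)))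
  simp only [Nat.choose_zero_right, Nat.cast_one, pow_zero, Nat.sub_zero, one_mul, mul_one]
  have : (0:ℝ) < 1 - q := by linarith
  positivity

lemma binomCDF_mono (h0 : 0 ≤ q) (h1 : q ≤ 1) : Monotone (binomCDF n q) := by
  apply monotone_nat_of_le_succ
  intro m
  rw [binomCDF_succ]
  have := term_nonneg (n := n) h0 h1 (m+1)
  linarith

lemma binomCDF_eq_one (h0 : 0 ≤ q) (h1 : q ≤ 1) {m : ℕ} (hm : n ≤ m) :
    binomCDF n q m = 1 := by
  have key : binomCDF n q m = binomCDF n q n := by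
    rw [binomCDF, binomCDF]
    apply (Finset.sum_subset (Finset.range_subset_range.mpr (by omega)) _).symm
    intro k _ hk
    simp only [Finset.mem_range, not_lt] at hk
    rw [Nat.choose_eq_zero_of_lt (by omega)]
    simp
  rw [key, binomCDF]
  have := add_pow q (1 - q) n
  simp only [add_sub_cancel, one_pow] at this
  conv_rhs => rw [this]
  apply Finset.sum_congr rfl
  intro k _
  ring

lemma binomCDF_le_one (h0 : 0 ≤ q) (h1 : q ≤ 1) (m : ℕ) : binomCDF n q m ≤ 1 := by
  rcases le_total n m with h | h
  · exact (binomCDF_eq_one h0 h1 h).le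
  · rw [← binomCDF_eq_one h0 h1 (le_refl n)]
    exact binomCDF_mono h0 h1 h

lemma bentW_nat (n : ℕ) (q : ℝ) (t : ℕ) :
    bentW n q (t : ℝ) = ∑ i ∈ Finset.range t, binomCDF n q i := by
  induction t with
  | zero =>
    simp only [Nat.cast_zero, Finset.range_zero, Finset.sum_empty, bentW]
    apply Finset.sum_eq_zero
    intro k _
    have : max (0 - (k:ℝ)) 0 = 0 := by
      apply max_eq_right; simp
    rw [this, mul_zero]
  | succ t ih =>
    rw [Finset.sum_range_succ, ← ih, bentW, bentW]
    have key : ∀ k ∈ Finset.range (n+1),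
        (n.choose k : ℝ) * q ^ k * (1 - q) ^ (n - k) * max (((t:ℕ)+1 : ℕ) - (k:ℝ)) 0
        = (n.choose k : ℝ) * q ^ k * (1 - q) ^ (n - k) * max ((t:ℝ) - k) 0
          + (if k ≤ t then (n.choose k : ℝ) * q ^ k * (1 - q) ^ (n - k) else 0) := by
      intro k _
      rcases le_or_gt k t with hk | hk
      · rw [if_pos hk]
        have e1 : max (((t:ℕ)+1:ℕ) - (k:ℝ)) 0 = ((t:ℝ) - k) + 1 := by
          push_cast
          rw [max_eq_left (by
            have : (k:ℝ) ≤ t := by exact_mod_cast hk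
            linarith)]
          ring
        have e2 : max ((t:ℝ) - k) 0 = (t:ℝ) - k := by
          apply max_eq_left
          have : (k:ℝ) ≤ t := by exact_mod_cast hk
          linarith
        rw [e1, e2]; ring
      · rw [if_neg (by omega)]
        have e1 : max (((t:ℕ)+1:ℕ) - (k:ℝ)) 0 = 0 := by
          apply max_eq_right
          push_cast
          have : (t:ℝ) + 1 ≤ k := by exact_mod_cast hk
          linarith
        have e2 : max ((t:ℝ) - k) 0 = 0 := by
          apply max_eq_right
          have : (t:ℝ) + 1 ≤ k := by exact_mod_cast hk
          linarith
        rw [e1, e2, add_zero]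
    push_cast at key ⊢
    rw [Finset.sum_congr rfl key, Finset.sum_add_distrib]
    congr 1
    rw [Finset.sum_ite, Finset.sum_const_zero, add_zero, binomCDF]
    rcases le_or_gt t n with h | h
    · apply Finset.sum_congr _ (fun _ _ => rfl)
      ext k
      simp only [Finset.mem_filter, Finset.mem_range]
      omega
    · apply Finset.sum_subset
      · intro k hk
        simp only [Finset.mem_filter, Finset.mem_range] at hk ⊢
        omega
      · intro k hk hnk
        simp only [Finset.mem_filter, Finset.mem_range, not_and, not_le] at hk hnk
        rw [Nat.choose_eq_zero_of_lt (by omega)]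
        simp
end CDF

section LC
variable {n : ℕ} {q : ℝ}

lemma choose_ineq (n j k : ℕ) (hjk : j ≤ k) :
    n.choose j * n.choose (k+2) ≤ n.choose (j+1) * n.choose (k+1) := by
  rcases le_or_gt (k+2) n with h | h
  · have e1 : n.choose (j+1) * (j+1) = n.choose j * (n - j) := Nat.choose_succ_right_eq n j
    have e2 : n.choose (k+2) * (k+2) = n.choose (k+1) * (n - (k+1)) := Nat.choose_succ_right_eq n (k+1)
    have key : n.choose j * n.choose (k+2) * ((j+1)*(k+2)) ≤ n.choose (j+1) * n.choose (k+1) * ((j+1)*(k+2)) := by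
      calc n.choose j * n.choose (k+2) * ((j+1)*(k+2))
          = n.choose j * (n.choose (k+2) * (k+2)) * (j+1) := by ring
        _ = n.choose j * (n.choose (k+1) * (n - (k+1))) * (j+1) := by rw [e2]
        _ = n.choose j * n.choose (k+1) * ((n - (k+1)) * (j+1)) := by ring
        _ ≤ n.choose j * n.choose (k+1) * ((n - j) * (k+2)) := by
            apply Nat.mul_le_mul_left
            apply Nat.mul_le_mul <;> omega
        _ = n.choose j * (n - j) * n.choose (k+1) * (k+2) := by ring
        _ = n.choose (j+1) * (j+1) * n.choose (k+1) * (k+2) := by rw [e1]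
        _ = n.choose (j+1) * n.choose (k+1) * ((j+1)*(k+2)) := by ring
    exact Nat.le_of_mul_le_mul_right key (by positivity)
  · rw [Nat.choose_eq_zero_of_lt h, mul_zero]
    exact Nat.zero_le _

lemma pmf_lc (h0 : 0 ≤ q) (h1 : q ≤ 1) {j k : ℕ} (hjk : j ≤ k) :
    ((n.choose j : ℝ) * q ^ j * (1 - q) ^ (n - j)) *
      ((n.choose (k+2) : ℝ) * q ^ (k+2) * (1 - q) ^ (n - (k+2))) ≤
    ((n.choose (j+1) : ℝ) * q ^ (j+1) * (1 - q) ^ (n - (j+1))) *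
      ((n.choose (k+1) : ℝ) * q ^ (k+1) * (1 - q) ^ (n - (k+1))) := by
  have hq : (0:ℝ) ≤ 1 - q := by linarith
  rcases le_or_gt (k+2) n with h | h
  · have hcast : (n.choose j : ℝ) * n.choose (k+2) ≤ (n.choose (j+1) : ℝ) * n.choose (k+1) := by
      exact_mod_cast choose_ineq n j k hjk
    have e1 : ((n.choose j : ℝ) * q ^ j * (1 - q) ^ (n - j)) *
        ((n.choose (k+2) : ℝ) * q ^ (k+2) * (1 - q) ^ (n - (k+2)))
        = ((n.choose j : ℝ) * n.choose (k+2)) * (q ^ (j + (k+2)) * (1 - q) ^ ((n - j) + (n - (k+2)))) := by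
      rw [pow_add, pow_add]; ring
    have e2 : ((n.choose (j+1) : ℝ) * q ^ (j+1) * (1 - q) ^ (n - (j+1))) *
        ((n.choose (k+1) : ℝ) * q ^ (k+1) * (1 - q) ^ (n - (k+1)))
        = ((n.choose (j+1) : ℝ) * n.choose (k+1)) * (q ^ ((j+1) + (k+1)) * (1 - q) ^ ((n - (j+1)) + (n - (k+1)))) := by
      rw [pow_add, pow_add]; ring
    have eexp : j + (k+2) = (j+1) + (k+1) := by omega
    have eexp2 : (n - j) + (n - (k+2)) = (n - (j+1)) + (n - (k+1)) := by omega
    rw [e1, e2, eexp, eexp2]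
    apply mul_le_mul_of_nonneg_right hcast (by positivity)
  · rw [Nat.choose_eq_zero_of_lt h]
    have : (0:ℝ) ≤ ((n.choose (j+1) : ℝ) * q ^ (j+1) * (1 - q) ^ (n - (j+1))) *
      ((n.choose (k+1) : ℝ) * q ^ (k+1) * (1 - q) ^ (n - (k+1))) := by positivity
    simpa using this

lemma binomCDF_lc (h0 : 0 ≤ q) (h1 : q ≤ 1) (k : ℕ) :
    binomCDF n q k * binomCDF n q (k+2) ≤ binomCDF n q (k+1) * binomCDF n q (k+1) := by
  have hp := fun i => term_nonneg (n := n) h0 h1 i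
  have key : binomCDF n q k * ((n.choose (k+2) : ℝ) * q ^ (k+2) * (1 - q) ^ (n - (k+2)))
      ≤ binomCDF n q (k+1) * ((n.choose (k+1) : ℝ) * q ^ (k+1) * (1 - q) ^ (n - (k+1))) := by
    rw [binomCDF, Finset.sum_mul]
    have step1 : ∑ j ∈ Finset.range (k+1),
        ((n.choose j : ℝ) * q ^ j * (1 - q) ^ (n - j)) * ((n.choose (k+2) : ℝ) * q ^ (k+2) * (1 - q) ^ (n - (k+2)))
        ≤ ∑ j ∈ Finset.range (k+1),
        ((n.choose (j+1) : ℝ) * q ^ (j+1) * (1 - q) ^ (n - (j+1))) * ((n.choose (k+1) : ℝ) * q ^ (k+1) * (1 - q) ^ (n - (k+1))) := by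
      apply Finset.sum_le_sum
      intro j hj
      exact pmf_lc h0 h1 (by simpa [Nat.lt_succ_iff] using hj)
    apply step1.trans
    rw [← Finset.sum_mul]
    apply mul_le_mul_of_nonneg_right _ (hp (k+1))
    have : binomCDF n q (k+1) = (∑ j ∈ Finset.range (k+1), (n.choose (j+1) : ℝ) * q ^ (j+1) * (1 - q) ^ (n - (j+1)))
        + (n.choose 0 : ℝ) * q ^ 0 * (1 - q) ^ (n - 0) := by
      rw [binomCDF]
      exact Finset.sum_range_succ' _ (k+1)
    rw [this]
    have := hp 0
    simp only [Nat.choose_zero_right, Nat.cast_one, pow_zero, Nat.sub_zero, one_mul, mul_one] at this ⊢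
    linarith
  have e1 : binomCDF n q (k+2) = binomCDF n q (k+1) + (n.choose (k+2) : ℝ) * q ^ (k+2) * (1 - q) ^ (n - (k+2)) :=
    binomCDF_succ n q (k+1)
  have e2 : binomCDF n q (k+1) = binomCDF n q k + (n.choose (k+1) : ℝ) * q ^ (k+1) * (1 - q) ^ (n - (k+1)) :=
    binomCDF_succ n q k
  calc binomCDF n q k * binomCDF n q (k+2)
      = binomCDF n q k * binomCDF n q (k+1)
        + binomCDF n q k * ((n.choose (k+2) : ℝ) * q ^ (k+2) * (1 - q) ^ (n - (k+2))) := by rw [e1]; ring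
    _ ≤ binomCDF n q k * binomCDF n q (k+1)
        + binomCDF n q (k+1) * ((n.choose (k+1) : ℝ) * q ^ (k+1) * (1 - q) ^ (n - (k+1))) := by linarith [key]
    _ = (binomCDF n q k + (n.choose (k+1) : ℝ) * q ^ (k+1) * (1 - q) ^ (n - (k+1))) * binomCDF n q (k+1) := by ring
    _ = binomCDF n q (k+1) * binomCDF n q (k+1) := by rw [← e2, mul_comm]

end LC

section Ratio
variable {n : ℕ} {q : ℝ}

lemma ratio_antitone (h0 : 0 ≤ q) (h1 : q < 1) :
    Antitone (fun k => binomCDF n q (k+1) / binomCDF n q k) := by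
  apply antitone_nat_of_succ_le
  intro k
  show binomCDF n q (k+1+1) / binomCDF n q (k+1) ≤ binomCDF n q (k+1) / binomCDF n q k
  rw [div_le_div_iff₀ (binomCDF_pos h0 h1 _) (binomCDF_pos h0 h1 _)]
  have h := binomCDF_lc (n := n) h0 h1.le k
  calc binomCDF n q (k+1+1) * binomCDF n q k = binomCDF n q k * binomCDF n q (k+2) := by ring_nf
    _ ≤ binomCDF n q (k+1) * binomCDF n q (k+1) := h

lemma ratio_ge_one (h0 : 0 ≤ q) (h1 : q < 1) (k : ℕ) :
    1 ≤ binomCDF n q (k+1) / binomCDF n q k :=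
  (one_le_div (binomCDF_pos h0 h1 k)).mpr (binomCDF_mono h0 h1.le (Nat.le_succ k))

lemma F_succ_eq (h0 : 0 ≤ q) (h1 : q < 1) (k : ℕ) :
    binomCDF n q (k+1) = binomCDF n q k * (binomCDF n q (k+1) / binomCDF n q k) := by
  have hne := (binomCDF_pos (n := n) h0 h1 k).ne'
  field_simp

lemma F_upper (h0 : 0 ≤ q) (h1 : q < 1) (m : ℕ) : ∀ j : ℕ,
    binomCDF n q (m+j) ≤ binomCDF n q m * (binomCDF n q (m+1) / binomCDF n q m) ^ j := by
  intro j
  induction j with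
  | zero => simp
  | succ j ih =>
    have e1 : m + (j+1) = (m+j) + 1 := by omega
    have hr : binomCDF n q ((m+j)+1) / binomCDF n q (m+j)
        ≤ binomCDF n q (m+1) / binomCDF n q m :=
      ratio_antitone h0 h1 (Nat.le_add_right m j)
    rw [e1, F_succ_eq h0 h1 (m+j), pow_succ, ← mul_assoc]
    apply mul_le_mul ih hr
    · exact le_trans zero_le_one (ratio_ge_one h0 h1 (m+j))
    · exact mul_nonneg (binomCDF_nonneg h0 h1.le m)
        (pow_nonneg (le_trans zero_le_one (ratio_ge_one h0 h1 m)) j)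

lemma F_lower (h0 : 0 ≤ q) (h1 : q < 1) (m : ℕ) : ∀ j : ℕ, j ≤ m →
    binomCDF n q (m-j) * (binomCDF n q (m+1) / binomCDF n q m) ^ j ≤ binomCDF n q m := by
  intro j
  induction j with
  | zero => simp
  | succ j ih =>
    intro hj
    have e1 : m - (j+1) + 1 = m - j := by omega
    have hr : binomCDF n q (m+1) / binomCDF n q m
        ≤ binomCDF n q ((m-(j+1))+1) / binomCDF n q (m-(j+1)) :=
      ratio_antitone h0 h1 (by omega)
    have hρpos : (0:ℝ) ≤ binomCDF n q (m+1) / binomCDF n q m :=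
      le_trans zero_le_one (ratio_ge_one h0 h1 m)
    calc binomCDF n q (m-(j+1)) * (binomCDF n q (m+1) / binomCDF n q m) ^ (j+1)
        = (binomCDF n q (m-(j+1)) * (binomCDF n q (m+1) / binomCDF n q m))
          * (binomCDF n q (m+1) / binomCDF n q m) ^ j := by ring
      _ ≤ (binomCDF n q (m-(j+1)) * (binomCDF n q ((m-(j+1))+1) / binomCDF n q (m-(j+1))))
          * (binomCDF n q (m+1) / binomCDF n q m) ^ j := by
          apply mul_le_mul_of_nonneg_right _ (pow_nonneg hρpos j)
          exact mul_le_mul_of_nonneg_left hr (binomCDF_nonneg h0 h1.le _)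
      _ = binomCDF n q (m-j) * (binomCDF n q (m+1) / binomCDF n q m) ^ j := by
          rw [← F_succ_eq h0 h1 (m-(j+1)), e1]
      _ ≤ binomCDF n q m := ih (by omega)

lemma geomSum_le' {r : ℝ} (h0 : 0 ≤ r) (h1 : r < 1) (k : ℕ) :
    ∑ j ∈ Finset.range k, r ^ j ≤ (1 - r)⁻¹ := by
  have h2 : (0:ℝ) < 1 - r := by linarith
  rw [geom_sum_eq h1.ne k]
  have e : (r ^ k - 1) / (r - 1) = (1 - r ^ k) / (1 - r) := by
    rw [div_eq_div_iff (by linarith) (by linarith)]; ring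
  rw [e, inv_eq_one_div, div_le_div_iff₀ h2 h2]
  nlinarith [pow_nonneg h0 k]

lemma exists_N (ρ : ℝ) (hρ : 1 < ρ) :
    ∃ N : ℕ, 1 ≤ N ∧ ρ ^ N ≤ Real.exp 1 * ((N:ℝ) * (ρ - 1)) := by
  have hρ1 : (0:ℝ) < ρ - 1 := by linarith
  have hpos : 0 < 1/(ρ-1) := by positivity
  refine ⟨⌈1/(ρ-1)⌉₊, Nat.ceil_pos.mpr hpos, ?_⟩
  set N := ⌈1/(ρ-1)⌉₊ with hN
  set t := (N:ℝ) * (ρ - 1) with htdef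
  have ht1 : 1 ≤ t := by
    have h := Nat.le_ceil (1/(ρ-1))
    calc (1:ℝ) = (1/(ρ-1)) * (ρ-1) := by field_simp
      _ ≤ (N:ℝ) * (ρ-1) := mul_le_mul_of_nonneg_right h hρ1.le
  have ht2 : t ≤ ρ := by
    have h : (N:ℝ) < 1/(ρ-1) + 1 := Nat.ceil_lt_add_one hpos.le
    calc t = (N:ℝ) * (ρ-1) := htdef
      _ ≤ (1/(ρ-1) + 1) * (ρ-1) := mul_le_mul_of_nonneg_right h.le hρ1.le
      _ = ρ := by field_simp; ring
  have htpos : (0:ℝ) < t := by linarith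
  set s := (t - 1)/(ρ - 1) with hs
  have hs0 : 0 ≤ s := div_nonneg (by linarith) hρ1.le
  have hs1 : s ≤ 1 := by
    rw [hs, div_le_one hρ1]; linarith
  have chord : s * Real.log ρ ≤ Real.log t := by
    have hc := strictConcaveOn_log_Ioi.concaveOn.2 (Set.mem_Ioi.mpr one_pos)
      (Set.mem_Ioi.mpr (by linarith : (0:ℝ) < ρ)) (by linarith : (0:ℝ) ≤ 1 - s) hs0 (by ring)
    simp only [smul_eq_mul, Real.log_one, mul_zero, zero_add] at hc
    have e : (1-s) * 1 + s * ρ = t := by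
      rw [hs]; field_simp; ring
    rw [e] at hc
    exact hc
  have hlog : Real.log ρ ≤ ρ - 1 := Real.log_le_sub_one_of_pos (by linarith)
  have key : (N:ℝ) * Real.log ρ ≤ 1 + Real.log t := by
    have e : (N:ℝ) * Real.log ρ = s * Real.log ρ + Real.log ρ / (ρ-1) := by
      rw [hs, htdef]; field_simp; ring
    have h2 : Real.log ρ / (ρ-1) ≤ 1 := (div_le_one hρ1).mpr hlog
    linarith
  have e1 : ρ ^ N = Real.exp ((N:ℝ) * Real.log ρ) := by
    rw [Real.exp_nat_mul, Real.exp_log (by linarith)]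
  rw [e1]
  calc Real.exp ((N:ℝ) * Real.log ρ) ≤ Real.exp (1 + Real.log t) := Real.exp_le_exp.mpr key
    _ = Real.exp 1 * t := by rw [Real.exp_add, Real.exp_log htpos]

end Ratio

lemma sumF_le {n : ℕ} {q : ℝ} (h0 : 0 < q) (h1 : q < 1) (m : ℕ) (hFm : binomCDF n q m < 1) :
    ∃ N : ℕ, 1 ≤ N ∧
      ∑ i ∈ Finset.range (m + N), binomCDF n q i ≤ Real.exp 1 * N * binomCDF n q m := by
  have hmn : m + 1 ≤ n := by
    by_contra hc
    push_neg at hc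
    have := binomCDF_eq_one (n := n) h0.le h1.le (m := m) (by omega)
    linarith
  have hFmpos := binomCDF_pos (n := n) h0.le h1 m
  set ρ := binomCDF n q (m+1) / binomCDF n q m with hρdef
  have hρ : 1 < ρ := by
    rw [hρdef, lt_div_iff₀ hFmpos, one_mul, binomCDF_succ]
    have hch : 0 < n.choose (m+1) := Nat.choose_pos hmn
    have h2 : (0:ℝ) < 1 - q := by linarith
    have : (0:ℝ) < (n.choose (m+1) : ℝ) * q ^ (m+1) * (1-q) ^ (n - (m+1)) := by positivity
    linarith
  have hρ0 : (0:ℝ) < ρ := lt_trans one_pos hρ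
  have hD : (0:ℝ) < ρ - 1 := by linarith
  have hinv0 : (0:ℝ) ≤ ρ⁻¹ := by positivity
  have hinv1 : ρ⁻¹ < 1 := by
    rw [inv_lt_one_iff₀]; right; exact hρ
  obtain ⟨N, hN1, hN⟩ := exists_N ρ hρ
  refine ⟨N, hN1, ?_⟩
  have hsplit : m + N = (m+1) + (N-1) := by omega
  rw [hsplit, Finset.sum_range_add]
  have hterm : ∀ j ∈ Finset.range (m+1),
      binomCDF n q (m + 1 - 1 - j) ≤ binomCDF n q m * ρ⁻¹ ^ j := by
    intro j hj
    simp only [Finset.mem_range, Nat.lt_succ_iff] at hj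
    have hlow := F_lower (n := n) h0.le h1 m j hj
    rw [← hρdef] at hlow
    have e : m + 1 - 1 - j = m - j := by omega
    rw [e, inv_pow, ← div_eq_mul_inv, le_div_iff₀ (pow_pos hρ0 j)]
    exact hlow
  have part1 : ∑ i ∈ Finset.range (m+1), binomCDF n q i ≤ binomCDF n q m * ρ / (ρ - 1) := by
    calc ∑ i ∈ Finset.range (m+1), binomCDF n q i
        = ∑ j ∈ Finset.range (m+1), binomCDF n q (m + 1 - 1 - j) :=
          (Finset.sum_range_reflect _ _).symm
      _ ≤ ∑ j ∈ Finset.range (m+1), binomCDF n q m * ρ⁻¹ ^ j := Finset.sum_le_sum hterm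
      _ = binomCDF n q m * ∑ j ∈ Finset.range (m+1), ρ⁻¹ ^ j := by rw [Finset.mul_sum]
      _ ≤ binomCDF n q m * (1 - ρ⁻¹)⁻¹ :=
          mul_le_mul_of_nonneg_left (geomSum_le' hinv0 hinv1 _) hFmpos.le
      _ = binomCDF n q m * ρ / (ρ - 1) := by
          have hρne : ρ ≠ 0 := hρ0.ne'
          have h3 : 1 - ρ⁻¹ ≠ 0 := by
            have : (0:ℝ) < 1 - ρ⁻¹ := by linarith
            exact this.ne'
          field_simp
  have part2 : ∑ i ∈ Finset.range (N-1), binomCDF n q ((m+1) + i)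
      ≤ binomCDF n q m * ((ρ ^ N - ρ) / (ρ - 1)) := by
    have hterm2 : ∀ i ∈ Finset.range (N-1),
        binomCDF n q ((m+1) + i) ≤ binomCDF n q m * (ρ * ρ ^ i) := by
      intro i _
      have := F_upper (n := n) h0.le h1 m (1+i)
      rw [← hρdef] at this
      have e : m + (1+i) = (m+1) + i := by omega
      rw [e] at this
      rw [pow_add, pow_one] at this
      exact this
    calc ∑ i ∈ Finset.range (N-1), binomCDF n q ((m+1) + i)
        ≤ ∑ i ∈ Finset.range (N-1), binomCDF n q m * (ρ * ρ ^ i) := Finset.sum_le_sum hterm2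
      _ = binomCDF n q m * ρ * ∑ i ∈ Finset.range (N-1), ρ ^ i := by
          rw [Finset.mul_sum]
          apply Finset.sum_congr rfl
          intro i _
          ring
      _ = binomCDF n q m * ρ * ((ρ ^ (N-1) - 1) / (ρ - 1)) := by rw [geom_sum_eq hρ.ne' (N-1)]
      _ = binomCDF n q m * ((ρ ^ N - ρ) / (ρ - 1)) := by
          have e : ρ ^ N = ρ ^ (N-1) * ρ := by
            rw [← pow_succ]
            congr 1
            omega
          rw [e]
          field_simp
  have combine : binomCDF n q m * ρ / (ρ - 1) + binomCDF n q m * ((ρ ^ N - ρ) / (ρ - 1))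
      = binomCDF n q m * (ρ ^ N / (ρ - 1)) := by
    field_simp
    ring
  have final : binomCDF n q m * (ρ ^ N / (ρ - 1)) ≤ Real.exp 1 * N * binomCDF n q m := by
    have h4 : ρ ^ N / (ρ - 1) ≤ Real.exp 1 * N := by
      rw [div_le_iff₀ hD]
      calc ρ ^ N ≤ Real.exp 1 * ((N:ℝ) * (ρ - 1)) := hN
        _ = Real.exp 1 * N * (ρ - 1) := by ring
    calc binomCDF n q m * (ρ ^ N / (ρ - 1)) ≤ binomCDF n q m * (Real.exp 1 * N) :=
          mul_le_mul_of_nonneg_left h4 hFmpos.le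
      _ = Real.exp 1 * N * binomCDF n q m := by ring
  linarith [part1, part2]

section Prob
variable {Ω : Type*} [MeasurableSpace Ω]

lemma integrable_of_bdd {P : Measure Ω} [IsProbabilityMeasure P]
    {f : Ω → ℝ} (hf : AEStronglyMeasurable f P) {C : ℝ} (hC : ∀ᵐ ω ∂P, ‖f ω‖ ≤ C) :
    Integrable f P :=
  Integrable.mono' (integrable_const C) hf hC

lemma step_bound (P : Measure Ω) [IsProbabilityMeasure P]
    (T X : Ω → ℝ) (hT : Measurable T) (hX : Measurable X)
    (hTnn : ∀ ω, 0 ≤ T ω) (hX0 : ∀ ω, 0 ≤ X ω) (hX1 : ∀ ω, X ω ≤ 1)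
    (hind : IndepFun T X P) (μm : ℝ) (hμm : ∫ ω, X ω ∂P = μm) (h : ℝ) :
    ∫ ω, max (h - (T ω + X ω)) 0 ∂P ≤
      (1 - μm) * ∫ ω, max (h - T ω) 0 ∂P + μm * ∫ ω, max (h - 1 - T ω) 0 ∂P := by
  set ν := P.map T with hν
  set ν' := P.map X with hν'
  haveI hνprob : IsProbabilityMeasure ν := Measure.isProbabilityMeasure_map hT.aemeasurable
  haveI hν'prob : IsProbabilityMeasure ν' := Measure.isProbabilityMeasure_map hX.aemeasurable
  have hφc : Continuous (fun p : ℝ × ℝ => max (h - (p.1 + p.2)) 0) := by fun_prop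
  have hjoint : P.map (fun ω => (T ω, X ω)) = ν.prod ν' :=
    (indepFun_iff_map_prod_eq_prod_map_map hT.aemeasurable hX.aemeasurable).mp hind
  have hνae : ∀ᵐ t ∂ν, t ∈ Set.Ici (0:ℝ) := by
    rw [hν]
    exact (ae_map_iff (p := fun t => t ∈ Set.Ici (0:ℝ)) hT.aemeasurable
      measurableSet_Ici).mpr (Filter.Eventually.of_forall hTnn)
  have hν'ae : ∀ᵐ x ∂ν', x ∈ Set.Icc (0:ℝ) 1 := by
    rw [hν']
    exact (ae_map_iff (p := fun x => x ∈ Set.Icc (0:ℝ) 1) hX.aemeasurable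
      measurableSet_Icc).mpr (Filter.Eventually.of_forall (fun ω => ⟨hX0 ω, hX1 ω⟩))
  have hid : Integrable (fun x : ℝ => x) ν' := by
    apply integrable_of_bdd (f := fun x : ℝ => x) continuous_id.aestronglyMeasurable (C := 1)
    filter_upwards [hν'ae] with x hx
    rw [Real.norm_eq_abs, abs_le]
    exact ⟨by linarith [hx.1], hx.2⟩
  have hmean : ∫ x, x ∂ν' = μm := by
    rw [hν', integral_map (f := fun x : ℝ => x) hX.aemeasurable continuous_id.aestronglyMeasurable]
    exact hμm
  -- integrability of φ on the product
  have hz1 : ∀ᵐ z ∂ν.prod ν', 0 ≤ z.1 := by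
    rw [ae_iff]
    have e : {z : ℝ × ℝ | ¬ 0 ≤ z.1} = {t : ℝ | ¬ 0 ≤ t} ×ˢ (Set.univ : Set ℝ) := by
      ext z; simp [Set.mem_prod]
    rw [e, Measure.prod_prod]
    have : ν {t : ℝ | ¬ 0 ≤ t} = 0 := by
      rw [← ae_iff] at *
      filter_upwards [hνae] with t ht using ht
    rw [this, zero_mul]
  have hz2 : ∀ᵐ z ∂ν.prod ν', 0 ≤ z.2 := by
    rw [ae_iff]
    have e : {z : ℝ × ℝ | ¬ 0 ≤ z.2} = (Set.univ : Set ℝ) ×ˢ {x : ℝ | ¬ 0 ≤ x} := by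
      ext z; simp [Set.mem_prod]
    rw [e, Measure.prod_prod]
    have : ν' {x : ℝ | ¬ 0 ≤ x} = 0 := by
      rw [← ae_iff] at *
      filter_upwards [hν'ae] with x hx using hx.1
    rw [this, mul_zero]
  have hφint : Integrable (fun z : ℝ × ℝ => max (h - (z.1 + z.2)) 0) (ν.prod ν') := by
    apply integrable_of_bdd hφc.aestronglyMeasurable (C := |h|)
    filter_upwards [hz1, hz2] with z h1 h2
    rw [Real.norm_eq_abs, abs_of_nonneg (le_max_right _ 0)]
    apply max_le _ (abs_nonneg h)
    have := le_abs_self h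
    linarith
  -- inner bound
  have inner : ∀ t : ℝ, ∫ x, max (h - (t + x)) 0 ∂ν'
      ≤ (1 - μm) * max (h - t) 0 + μm * max (h - 1 - t) 0 := by
    intro t
    have hint1 : Integrable (fun x => max (h - (t + x)) 0) ν' := by
      apply integrable_of_bdd (Continuous.aestronglyMeasurable (by fun_prop)) (C := |h| + |t| + 1)
      filter_upwards [hν'ae] with x hx
      rw [Real.norm_eq_abs, abs_of_nonneg (le_max_right _ 0)]
      apply max_le
      · have h1 := le_abs_self h
        have h2 := neg_abs_le t
        linarith [hx.1]
      · positivity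
    have hI0 : Integrable (fun x : ℝ => 1 - x) ν' := by
      exact (integrable_const (1:ℝ)).sub hid
    have hI1 : Integrable (fun x : ℝ => (1 - x) * max (h - t) 0) ν' := hI0.mul_const _
    have hI2 : Integrable (fun x : ℝ => x * max (h - t - 1) 0) ν' := hid.mul_const _
    have hint2 : Integrable (fun x => (1 - x) * max (h - t) 0 + x * max (h - t - 1) 0) ν' :=
      hI1.add hI2
    have pt : ∀ᵐ x ∂ν', max (h - (t + x)) 0 ≤ (1 - x) * max (h - t) 0 + x * max (h - t - 1) 0 := by
      filter_upwards [hν'ae] with x hx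
      have hmc := maxConvex (h - t) x hx.1 hx.2
      have e : h - t - x = h - (t + x) := by ring
      rw [e] at hmc
      exact hmc
    calc ∫ x, max (h - (t + x)) 0 ∂ν'
        ≤ ∫ x, ((1 - x) * max (h - t) 0 + x * max (h - t - 1) 0) ∂ν' :=
          integral_mono_ae hint1 hint2 pt
      _ = (1 - μm) * max (h - t) 0 + μm * max (h - 1 - t) 0 := by
          have hsub1 : ∫ x, (1 - x) ∂ν' = 1 - μm := by
            rw [integral_sub (integrable_const (1:ℝ)) hid, hmean, integral_const]
            simp
          rw [integral_add hI1 hI2, integral_mul_const, integral_mul_const, hsub1, hmean]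
          have e : h - t - 1 = h - 1 - t := by ring
          rw [e]
  -- marginal integrabilities
  have hmax1 : Integrable (fun t => max (h - t) 0) ν := by
    apply integrable_of_bdd (Continuous.aestronglyMeasurable (by fun_prop)) (C := |h|)
    filter_upwards [hνae] with t ht
    rw [Real.norm_eq_abs, abs_of_nonneg (le_max_right _ 0)]
    apply max_le _ (abs_nonneg h)
    have := le_abs_self h
    simp only [Set.mem_Ici] at ht
    linarith
  have hmax2 : Integrable (fun t => max (h - 1 - t) 0) ν := by
    apply integrable_of_bdd (Continuous.aestronglyMeasurable (by fun_prop)) (C := |h| + 1)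
    filter_upwards [hνae] with t ht
    rw [Real.norm_eq_abs, abs_of_nonneg (le_max_right _ 0)]
    apply max_le
    · have := le_abs_self h
      simp only [Set.mem_Ici] at ht
      linarith
    · positivity
  calc ∫ ω, max (h - (T ω + X ω)) 0 ∂P
      = ∫ z : ℝ × ℝ, max (h - (z.1 + z.2)) 0 ∂(P.map (fun ω => (T ω, X ω))) :=
        (integral_map (hT.aemeasurable.prodMk hX.aemeasurable) hφc.aestronglyMeasurable).symm
    _ = ∫ z : ℝ × ℝ, max (h - (z.1 + z.2)) 0 ∂(ν.prod ν') := by rw [hjoint]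
    _ = ∫ t, (∫ x, max (h - (t + x)) 0 ∂ν') ∂ν := integral_prod _ hφint
    _ ≤ ∫ t, ((1 - μm) * max (h - t) 0 + μm * max (h - 1 - t) 0) ∂ν := by
        apply integral_mono_ae hφint.integral_prod_left
          ((hmax1.const_mul _).add (hmax2.const_mul _))
          (Filter.Eventually.of_forall inner)
    _ = (1 - μm) * ∫ ω, max (h - T ω) 0 ∂P + μm * ∫ ω, max (h - 1 - T ω) 0 ∂P := by
        rw [integral_add (hmax1.const_mul _) (hmax2.const_mul _),
          integral_const_mul, integral_const_mul, hν,
          integral_map hT.aemeasurable (Continuous.aestronglyMeasurable (by fun_prop)),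
          integral_map hT.aemeasurable (Continuous.aestronglyMeasurable (by fun_prop))]

end Prob

section Prob2
variable {Ω : Type*} [MeasurableSpace Ω]

lemma int_max (P : Measure Ω) [IsProbabilityMeasure P] {T : Ω → ℝ}
    (hT : Measurable T) (hTnn : ∀ ω, 0 ≤ T ω) (h : ℝ) :
    Integrable (fun ω => max (h - T ω) 0) P := by
  apply integrable_of_bdd ((hT.const_sub h).max measurable_const).aestronglyMeasurable (C := |h|)
  apply Filter.Eventually.of_forall
  intro ω
  rw [Real.norm_eq_abs, abs_of_nonneg (le_max_right _ 0)]
  apply max_le _ (abs_nonneg h)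
  linarith [le_abs_self h, hTnn ω]

lemma sum_bound (P : Measure Ω) [IsProbabilityMeasure P] {n : ℕ}
    (L : Fin n → Ω → ℝ) (hLmeas : ∀ j, Measurable (L j))
    (hL01 : ∀ j ω, L j ω ∈ Set.Icc (0 : ℝ) 1)
    (hindep : iIndepFun L P)
    (μm q : ℝ) (hμm : ∀ j, ∫ ω, L j ω ∂P = μm)
    (hq0 : 0 ≤ q) (hq1 : q ≤ 1) (hqμ : q ≤ μm) :
    ∀ (s : Finset (Fin n)) (h : ℝ),
      ∫ ω, max (h - ∑ j ∈ s, L j ω) 0 ∂P ≤ bentW s.card q h := by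
  intro s
  induction s using Finset.induction_on with
  | empty =>
    intro h
    simp only [Finset.sum_empty, sub_zero, Finset.card_empty]
    rw [integral_const]
    simp only [measure_univ, ENNReal.toReal_one, smul_eq_mul, one_mul]
    rw [bentW]
    simp
  | insert i s' hi ih =>
    intro h
    have hT : Measurable (fun ω => ∑ j ∈ s', L j ω) :=
      Finset.measurable_sum _ (fun j _ => hLmeas j)
    have hTnn : ∀ ω, 0 ≤ ∑ j ∈ s', L j ω :=
      fun ω => Finset.sum_nonneg (fun j _ => (hL01 j ω).1)
    have hind : IndepFun (fun ω => ∑ j ∈ s', L j ω) (L i) P := by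
      have hI := hindep.indepFun_finsetSum_of_notMem hLmeas hi
      have e : (∑ j ∈ s', L j) = (fun ω => ∑ j ∈ s', L j ω) := by
        funext ω
        simp [Finset.sum_apply]
      rwa [e] at hI
    have step := step_bound P (fun ω => ∑ j ∈ s', L j ω) (L i) hT (hLmeas i)
      hTnn (fun ω => (hL01 i ω).1) (fun ω => (hL01 i ω).2) hind μm (hμm i) h
    have e1 : ∫ ω, max (h - ∑ j ∈ insert i s', L j ω) 0 ∂P
        = ∫ ω, max (h - ((∑ j ∈ s', L j ω) + L i ω)) 0 ∂P := by
      apply integral_congr_ae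
      apply Filter.Eventually.of_forall
      intro ω
      simp only [Finset.sum_insert hi]
      ring_nf
    have hI1 := int_max P hT hTnn h
    have hI2 := int_max P hT hTnn (h - 1)
    have hmono : ∫ ω, max (h - 1 - ∑ j ∈ s', L j ω) 0 ∂P
        ≤ ∫ ω, max (h - ∑ j ∈ s', L j ω) 0 ∂P := by
      apply integral_mono hI2 hI1
      intro ω
      apply max_le_max _ le_rfl
      have : (0:ℝ) ≤ 1 := zero_le_one
      linarith
    have hswap : (1 - μm) * (∫ ω, max (h - ∑ j ∈ s', L j ω) 0 ∂P)
          + μm * (∫ ω, max (h - 1 - ∑ j ∈ s', L j ω) 0 ∂P)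
        ≤ (1 - q) * (∫ ω, max (h - ∑ j ∈ s', L j ω) 0 ∂P)
          + q * (∫ ω, max (h - 1 - ∑ j ∈ s', L j ω) 0 ∂P) := by
      nlinarith [hmono, hqμ]
    have hcard : (insert i s').card = s'.card + 1 := Finset.card_insert_of_notMem hi
    rw [hcard, bentW_succ, e1]
    have hih1 := ih h
    have hih2 := ih (h - 1)
    calc ∫ ω, max (h - ((∑ j ∈ s', L j ω) + L i ω)) 0 ∂P
        ≤ (1 - μm) * (∫ ω, max (h - ∑ j ∈ s', L j ω) 0 ∂P)
          + μm * (∫ ω, max (h - 1 - ∑ j ∈ s', L j ω) 0 ∂P) := step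
      _ ≤ (1 - q) * (∫ ω, max (h - ∑ j ∈ s', L j ω) 0 ∂P)
          + q * (∫ ω, max (h - 1 - ∑ j ∈ s', L j ω) 0 ∂P) := hswap
      _ ≤ (1 - q) * bentW s'.card q h + q * bentW s'.card q (h - 1) := by
          apply add_le_add
          · exact mul_le_mul_of_nonneg_left hih1 (by linarith)
          · exact mul_le_mul_of_nonneg_left hih2 hq0

end Prob2

lemma bentkus_prob {Ω : Type*} [MeasurableSpace Ω] (P : Measure Ω) [IsProbabilityMeasure P]
    {n : ℕ} (L : Fin n → Ω → ℝ) (hLmeas : ∀ j, Measurable (L j))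
    (hL01 : ∀ j ω, L j ω ∈ Set.Icc (0 : ℝ) 1)
    (hindep : iIndepFun L P)
    (μm δ : ℝ) (hμm : ∀ j, ∫ ω, L j ω ∂P = μm)
    (hδ0 : 0 < δ) (hδ1 : δ < 1) (hδμ : δ ≤ μm)
    (m : ℕ) (hFm : binomCDF n δ m < 1) :
    (P {ω | ∑ j, L j ω ≤ (m : ℝ)}).toReal ≤ Real.exp 1 * binomCDF n δ m := by
  obtain ⟨N, hN1, hN⟩ := sumF_le hδ0 hδ1 m hFm
  have hS : Measurable (fun ω => ∑ j, L j ω) := Finset.measurable_sum _ (fun j _ => hLmeas j)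
  have hSnn : ∀ ω, 0 ≤ ∑ j, L j ω := fun ω => Finset.sum_nonneg fun j _ => (hL01 j ω).1
  have hA : MeasurableSet {ω | ∑ j, L j ω ≤ (m : ℝ)} := measurableSet_le hS measurable_const
  have hNpos : (0:ℝ) < N := by exact_mod_cast hN1
  have markov : (P {ω | ∑ j, L j ω ≤ (m : ℝ)}).toReal * N
      ≤ ∫ ω, max (((m + N : ℕ) : ℝ) - ∑ j, L j ω) 0 ∂P := by
    have e1 : ∫ ω, Set.indicator {ω | ∑ j, L j ω ≤ (m:ℝ)} (fun _ => (N:ℝ)) ω ∂P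
        = (P {ω | ∑ j, L j ω ≤ (m:ℝ)}).toReal * N := by
      rw [integral_indicator_const _ hA]
      simp [mul_comm, Measure.real]
    rw [← e1]
    apply integral_mono ((integrable_const (N:ℝ)).indicator hA) (int_max P hS hSnn _)
    intro ω
    by_cases hω : ω ∈ {ω | ∑ j, L j ω ≤ (m:ℝ)}
    · rw [Set.indicator_of_mem hω]
      have hle : ∑ j, L j ω ≤ m := hω
      apply le_trans _ (le_max_left _ _)
      push_cast
      linarith
    · rw [Set.indicator_of_notMem hω]
      exact le_max_right _ _
  have conv := sum_bound P L hLmeas hL01 hindep μm δ hμm hδ0.le hδ1.le hδμ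
    Finset.univ (((m + N : ℕ) : ℝ))
  rw [Finset.card_univ, Fintype.card_fin, bentW_nat] at conv
  have chain : (P {ω | ∑ j, L j ω ≤ (m : ℝ)}).toReal * N ≤ (Real.exp 1 * binomCDF n δ m) * N := by
    calc (P {ω | ∑ j, L j ω ≤ (m : ℝ)}).toReal * N
        ≤ ∫ ω, max (((m + N : ℕ) : ℝ) - ∑ j, L j ω) 0 ∂P := markov
      _ ≤ ∑ i ∈ Finset.range (m + N), binomCDF n δ i := conv
      _ ≤ Real.exp 1 * N * binomCDF n δ m := hN
      _ = (Real.exp 1 * binomCDF n δ m) * N := by ring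
  exact le_of_mul_le_mul_right chain hNpos

/-- The Bentkus component `p^B = e·ℙ(Bin(n,δ) ≤ ⌈n·L̄⌉)` of the Hoeffding–Bentkus p-value
is a valid p-value for the hypothesis `H : μ > δ`. -/
theorem bentkus_p_value_valid
    {Ω : Type*} [MeasurableSpace Ω] (P : Measure Ω) [IsProbabilityMeasure P]
    (n : ℕ) (hn : 1 ≤ n)
    (L : Fin n → Ω → ℝ)
    (hLmeas : ∀ j, Measurable (L j))
    (hL01 : ∀ j ω, L j ω ∈ Set.Icc (0 : ℝ) 1)
    (hindep : iIndepFun L P)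
    (hident : ∀ j, IdentDistrib (L j) (L ⟨0, hn⟩) P P)
    (μ : ℝ) (hμ : μ = ∫ ω, L ⟨0, hn⟩ ω ∂P)
    (δ : ℝ) (hδ : δ ∈ Set.Ioo (0 : ℝ) 1)
    (hμδ : δ < μ)
    (Lbar : Ω → ℝ) (hLbar : ∀ ω, Lbar ω = (1 / n : ℝ) * ∑ j, L j ω)
    (pB : Ω → ℝ)
    (hpB : ∀ ω, pB ω = Real.exp 1 * binomCDF n δ ⌈(n : ℝ) * Lbar ω⌉₊) :
    ∀ u ∈ Set.Icc (0 : ℝ) 1, (P {ω | pB ω ≤ u}).toReal ≤ u := by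
  intro u hu
  obtain ⟨hu0, hu1⟩ := hu
  obtain ⟨hδ0, hδ1⟩ := hδ
  have hμm : ∀ j, ∫ ω, L j ω ∂P = μ := fun j => by
    rw [hμ]; exact (hident j).integral_eq
  have hnpos : (0:ℝ) < n := by exact_mod_cast hn
  have hnLbar : ∀ ω, (n:ℝ) * Lbar ω = ∑ j, L j ω := by
    intro ω
    rw [hLbar ω]
    field_simp
  have hexp1 : (1:ℝ) < Real.exp 1 := by
    have := Real.add_one_le_exp (1:ℝ)
    linarith
  classical
  by_cases hB : ∃ m₀ : ℕ, Real.exp 1 * binomCDF n δ m₀ ≤ u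
  · obtain ⟨m₀, hm₀⟩ := hB
    have hm₀n : m₀ ≤ n := by
      by_contra hc
      push_neg at hc
      have hF1 : binomCDF n δ m₀ = 1 := binomCDF_eq_one hδ0.le hδ1.le (by omega)
      rw [hF1, mul_one] at hm₀
      linarith
    set mstar := Nat.findGreatest (fun m => Real.exp 1 * binomCDF n δ m ≤ u) n with hmstar
    have hQm : Real.exp 1 * binomCDF n δ mstar ≤ u :=
      Nat.findGreatest_spec (P := fun m => Real.exp 1 * binomCDF n δ m ≤ u) hm₀n hm₀
    have hsub : {ω | pB ω ≤ u} ⊆ {ω | ∑ j, L j ω ≤ (mstar : ℝ)} := by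
      intro ω hω
      simp only [Set.mem_setOf_eq] at hω ⊢
      rw [hpB ω] at hω
      have hTn : ⌈(n:ℝ) * Lbar ω⌉₊ ≤ n := by
        apply Nat.ceil_le.mpr
        rw [hnLbar ω]
        calc ∑ j, L j ω ≤ ∑ _j : Fin n, (1:ℝ) := Finset.sum_le_sum (fun j _ => (hL01 j ω).2)
          _ = n := by simp
      have hle : ⌈(n:ℝ) * Lbar ω⌉₊ ≤ mstar :=
        Nat.le_findGreatest (P := fun m => Real.exp 1 * binomCDF n δ m ≤ u) hTn hω
      calc ∑ j, L j ω = (n:ℝ) * Lbar ω := (hnLbar ω).symm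
        _ ≤ (⌈(n:ℝ) * Lbar ω⌉₊ : ℝ) := Nat.le_ceil _
        _ ≤ (mstar : ℝ) := by exact_mod_cast hle
    have hFm : binomCDF n δ mstar < 1 := by
      by_contra hc
      push_neg at hc
      have h2 : Real.exp 1 * 1 ≤ Real.exp 1 * binomCDF n δ mstar := by nlinarith
      linarith
    have key := bentkus_prob P L hLmeas hL01 hindep μ δ hμm hδ0 hδ1 hμδ.le mstar hFm
    calc (P {ω | pB ω ≤ u}).toReal
        ≤ (P {ω | ∑ j, L j ω ≤ (mstar : ℝ)}).toReal :=
          ENNReal.toReal_mono (measure_ne_top P _) (measure_mono hsub)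
      _ ≤ Real.exp 1 * binomCDF n δ mstar := key
      _ ≤ u := hQm
  · push_neg at hB
    have hempty : {ω | pB ω ≤ u} = ∅ := by
      ext ω
      simp only [Set.mem_setOf_eq, Set.mem_empty_iff_false, iff_false, not_le]
      rw [hpB ω]
      exact hB _
    rw [hempty]
    simpa using hu0
end

section
/- (Conformal calibration lemma) Let S_1, …, S_{n+1} be i.i.d. real-valued random variables, and let α ∈ (0,1) be such that k := ⌈(1−α)(n+1)⌉ ≤ n. Let λ̂ denote the k-th smallest value among S_1, …, S_n (equivalently, the (1+1/n)(1−α)-empirical quantile of {S_j}_{j=1}^n). Then ℙ( S_{n+1} ≤ λ̂ ) ≥ 1 − α. -/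
open MeasureTheory ProbabilityTheory Set

open scoped ENNReal NNReal

namespace Conformal

variable {m : ℕ} (v : Fin m → ℝ) (k : ℕ)

lemma natCard_eq_cnt (t : ℝ) :
    Nat.card {j : Fin m // v j ≤ t} = (Finset.univ.filter (fun j => v j ≤ t)).card := by
  simp [Nat.card_eq_fintype_card, Fintype.card_subtype]

lemma kthSmallest_eq :
    kthSmallest v k = sInf {t : ℝ | k ≤ (Finset.univ.filter (fun j => v j ≤ t)).card} := by
  unfold kthSmallest; congr 1; ext t; simp only [mem_setOf_eq, natCard_eq_cnt]

lemma bddBelow_S (hk1 : 1 ≤ k) :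
    BddBelow {t : ℝ | k ≤ (Finset.univ.filter (fun j => v j ≤ t)).card} := by
  rcases Nat.eq_zero_or_pos m with hm | hm
  · subst hm
    have he : {t : ℝ | k ≤ (Finset.univ.filter (fun j : Fin 0 => v j ≤ t)).card} = ∅ := by
      ext t
      simp only [mem_setOf_eq, mem_empty_iff_false, iff_false, not_le, Finset.univ_eq_empty,
        Finset.filter_empty, Finset.card_empty]
      omega
    rw [he]; exact bddBelow_empty
  obtain ⟨j1⟩ : Nonempty (Fin m) := ⟨⟨0, hm⟩⟩
  obtain ⟨j2, _, hj2⟩ := Finset.exists_min_image Finset.univ v ⟨j1, Finset.mem_univ j1⟩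
  refine ⟨v j2, fun t ht => ?_⟩
  simp only [mem_setOf_eq] at ht
  have : (Finset.univ.filter (fun j => v j ≤ t)).Nonempty := by
    rw [← Finset.card_pos]; omega
  obtain ⟨j3, hj3⟩ := this
  exact le_trans (hj2 j3 (Finset.mem_univ j3)) (Finset.mem_filter.1 hj3).2

lemma cnt_attained (hk1 : 1 ≤ k) (hkm : k ≤ m) :
    k ≤ (Finset.univ.filter (fun j => v j ≤ kthSmallest v k)).card := by
  have hm : 0 < m := lt_of_lt_of_le hk1 hkm
  obtain ⟨j1⟩ : Nonempty (Fin m) := ⟨⟨0, hm⟩⟩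
  -- the set S
  set S := {t : ℝ | k ≤ (Finset.univ.filter (fun j => v j ≤ t)).card} with hS
  -- max of v gives an element of S ∩ range v
  obtain ⟨jmax, _, hjmax⟩ := Finset.exists_max_image Finset.univ v ⟨j1, Finset.mem_univ j1⟩
  have hmaxS : v jmax ∈ S := by
    simp only [hS, mem_setOf_eq]
    have : Finset.univ.filter (fun j => v j ≤ v jmax) = Finset.univ := by
      apply Finset.filter_true_of_mem
      intro j _; exact hjmax j (Finset.mem_univ j)
    rw [this, Finset.card_univ, Fintype.card_fin]; exact hkm
  -- candidates: indices j with v j ∈ S; take minimal value among them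
  have hcand : (Finset.univ.filter (fun j => v j ∈ S)).Nonempty :=
    ⟨jmax, Finset.mem_filter.2 ⟨Finset.mem_univ jmax, hmaxS⟩⟩
  obtain ⟨j0, hj0mem, hj0min⟩ :=
    Finset.exists_min_image (Finset.univ.filter (fun j => v j ∈ S)) v hcand
  have hj0S : v j0 ∈ S := (Finset.mem_filter.1 hj0mem).2
  -- v j0 is a lower bound of S
  have hlb : ∀ t ∈ S, v j0 ≤ t := by
    intro t ht
    simp only [hS, mem_setOf_eq] at ht
    have hne : (Finset.univ.filter (fun j => v j ≤ t)).Nonempty := by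
      rw [← Finset.card_pos]; omega
    obtain ⟨j', hj'mem, hj'max⟩ :=
      Finset.exists_max_image (Finset.univ.filter (fun j => v j ≤ t)) v hne
    have hj't : v j' ≤ t := (Finset.mem_filter.1 hj'mem).2
    have hsub : (Finset.univ.filter (fun j => v j ≤ t))
        ⊆ (Finset.univ.filter (fun j => v j ≤ v j')) := by
      intro j hj
      rw [Finset.mem_filter] at *
      exact ⟨hj.1, hj'max j (Finset.mem_filter.2 ⟨Finset.mem_univ j, hj.2⟩)⟩
    have hj'S : v j' ∈ S := by
      simp only [hS, mem_setOf_eq]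
      exact le_trans ht (Finset.card_le_card hsub)
    calc v j0 ≤ v j' := hj0min j' (Finset.mem_filter.2 ⟨Finset.mem_univ j', hj'S⟩)
    _ ≤ t := hj't
  have hQ : kthSmallest v k = v j0 := by
    rw [kthSmallest_eq]
    exact le_antisymm (csInf_le ⟨v j0, hlb⟩ hj0S) (le_csInf ⟨v j0, hj0S⟩ hlb)
  rw [hQ]
  simpa only [hS, mem_setOf_eq] using hj0S

lemma le_kthSmallest_iff (hk1 : 1 ≤ k) (hkm : k ≤ m) (s : ℝ) :
    s ≤ kthSmallest v k ↔ (Finset.univ.filter (fun j => v j < s)).card < k := by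
  constructor
  · intro hs
    by_contra hcon
    push_neg at hcon
    have hne : (Finset.univ.filter (fun j => v j < s)).Nonempty := by
      rw [← Finset.card_pos]; omega
    obtain ⟨j', hj'mem, hj'max⟩ :=
      Finset.exists_max_image (Finset.univ.filter (fun j => v j < s)) v hne
    have hj's : v j' < s := (Finset.mem_filter.1 hj'mem).2
    have hcnt : k ≤ (Finset.univ.filter (fun j => v j ≤ v j')).card := by
      refine le_trans hcon (Finset.card_le_card ?_)
      intro j hj
      rw [Finset.mem_filter] at *
      exact ⟨hj.1, hj'max j (Finset.mem_filter.2 ⟨Finset.mem_univ j, hj.2⟩)⟩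
    have : kthSmallest v k ≤ v j' := by
      rw [kthSmallest_eq]
      exact csInf_le (bddBelow_S v k hk1) hcnt
    linarith
  · intro h
    by_contra hcon
    push_neg at hcon
    have hatt := cnt_attained v k hk1 hkm
    have : (Finset.univ.filter (fun j => v j ≤ kthSmallest v k)).card
        ≤ (Finset.univ.filter (fun j => v j < s)).card := by
      apply Finset.card_le_card
      intro j hj
      rw [Finset.mem_filter] at *
      exact ⟨hj.1, lt_of_le_of_lt hj.2 hcon⟩
    omega

/-- at least `k` indices have strict-less count `< k` -/
lemma card_good (hk1 : 1 ≤ k) (hkm : k ≤ m) :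
    k ≤ (Finset.univ.filter
      (fun i => (Finset.univ.filter (fun j => v j < v i)).card < k)).card := by
  have heq : (Finset.univ.filter
      (fun i => (Finset.univ.filter (fun j => v j < v i)).card < k))
      = Finset.univ.filter (fun i => v i ≤ kthSmallest v k) := by
    apply Finset.filter_congr
    intro i _
    exact (le_kthSmallest_iff v k hk1 hkm (v i)).symm
  rw [heq]
  exact cnt_attained v k hk1 hkm

end Conformal


/-- Conformal calibration lemma: if `S_1, …, S_{n+1}` are i.i.d. and `λ̂` is the
`⌈(1-α)(n+1)⌉`-th smallest value among `S_1, …, S_n` (with `⌈(1-α)(n+1)⌉ ≤ n`), then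
`ℙ(S_{n+1} ≤ λ̂) ≥ 1 - α`. -/
theorem conformal_calibration
    {Ω : Type*} [MeasurableSpace Ω] (P : Measure Ω) [IsProbabilityMeasure P]
    (n : ℕ)
    (S : Fin (n + 1) → Ω → ℝ)
    (hSmeas : ∀ j, Measurable (S j))
    (hindep : iIndepFun S P)
    (hident : ∀ j, IdentDistrib (S j) (S 0) P P)
    (α : ℝ) (hα : α ∈ Set.Ioo (0 : ℝ) 1)
    (hk : ⌈(1 - α) * (n + 1 : ℝ)⌉₊ ≤ n)
    (lamhat : Ω → ℝ)
    (hlamhat : ∀ ω, lamhat ω =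
      kthSmallest (fun j : Fin n => S j.castSucc ω) ⌈(1 - α) * (n + 1 : ℝ)⌉₊) :
    1 - α ≤ (P {ω | S (Fin.last n) ω ≤ lamhat ω}).toReal := by
  classical
  set k := ⌈(1 - α) * (n + 1 : ℝ)⌉₊ with hkdef
  have hα1 : (0:ℝ) < 1 - α := by linarith [hα.2]
  have hnpos : (0:ℝ) < (n:ℝ) + 1 := by positivity
  have hk1 : 1 ≤ k := by
    rw [hkdef]
    exact Nat.one_le_ceil_iff.mpr (by positivity)
  -- the counting functions and "good" sets on vector space
  set c : Fin (n+1) → (Fin (n+1) → ℝ) → ℕ :=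
    fun i x => (Finset.univ.filter (fun j => x j < x i)).card with hc
  have hcmeas : ∀ i, Measurable (c i) := by
    intro i
    have : c i = fun x => ∑ j : Fin (n+1), if x j < x i then 1 else 0 := by
      funext x; simp only [hc]; rw [Finset.card_filter]
    rw [this]
    apply Finset.measurable_sum
    intro j _
    exact Measurable.ite (measurableSet_lt (measurable_pi_apply j) (measurable_pi_apply i))
      measurable_const measurable_const
  set A : Fin (n+1) → Set (Fin (n+1) → ℝ) := fun i => {x | c i x < k} with hA
  have hAmeas : ∀ i, MeasurableSet (A i) := by
    intro i
    have : A i = (c i) ⁻¹' (Set.Iio k) := rfl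
    rw [this]; exact (hcmeas i) (by trivial)
  -- joint random vector
  set X : Ω → (Fin (n+1) → ℝ) := fun ω i => S i ω with hXdef
  have hXmeas : Measurable X := measurable_pi_lambda _ hSmeas
  set μ0 := Measure.map (S 0) P with hμ0
  have hμ0prob : IsProbabilityMeasure μ0 := Measure.isProbabilityMeasure_map (hSmeas 0).aemeasurable
  -- joint law is the iid product
  have hmap : Measure.map X P = Measure.pi (fun _ : Fin (n+1) => μ0) := by
    refine (Measure.pi_eq fun s hs => ?_).symm
    rw [Measure.map_apply hXmeas (MeasurableSet.univ_pi hs)]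
    have hpre : X ⁻¹' (Set.univ.pi s) = ⋂ i ∈ Finset.univ, S i ⁻¹' s i := by
      ext ω; simp [Set.mem_pi, hXdef]
    rw [hpre, hindep.measure_inter_preimage_eq_mul Finset.univ (fun i _ => hs i)]
    refine Finset.prod_congr rfl fun i _ => ?_
    rw [← Measure.map_apply (hSmeas i) (hs i), (hident i).map_eq, hμ0]
  -- exchangeability: all map X P (A i) are equal
  have hperm : ∀ i, Measure.map X P (A i) = Measure.map X P (A (Fin.last n)) := by
    intro i
    set e : Equiv.Perm (Fin (n+1)) := Equiv.swap i (Fin.last n) with he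
    have hid : MeasurePreserving (MeasurableEquiv.refl ℝ) μ0 μ0 := by
      exact ⟨measurable_id, Measure.map_id⟩
    have hpres := measurePreserving_arrowCongr' (fun _ : Fin (n+1) => μ0)
      (fun _ : Fin (n+1) => μ0) e.symm (MeasurableEquiv.refl ℝ) (fun _ => hid)
    have hAe : A i = (MeasurableEquiv.arrowCongr' e.symm (MeasurableEquiv.refl ℝ)) ⁻¹'
        (A (Fin.last n)) := by
      ext x
      have happ : (MeasurableEquiv.arrowCongr' e.symm (MeasurableEquiv.refl ℝ)) x
          = fun j => x (e j) := by
        funext j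
        simp [MeasurableEquiv.arrowCongr', Equiv.arrowCongr', Equiv.arrowCongr]
      simp only [mem_preimage, happ, hA, mem_setOf_eq, hc]
      have hlast : x (e (Fin.last n)) = x i := by rw [he, Equiv.swap_apply_right]
      simp only [hlast]
      have hcard : (Finset.univ.filter (fun j => x (e j) < x i)).card
          = (Finset.univ.filter (fun j => x j < x i)).card := by
        apply Finset.card_bij' (fun j _ => e j) (fun j _ => e.symm j)
        · intro j hj
          rw [Finset.mem_filter] at *
          exact ⟨Finset.mem_univ _, hj.2⟩
        · intro j hj
          rw [Finset.mem_filter] at *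
          refine ⟨Finset.mem_univ _, ?_⟩
          rw [Equiv.apply_symm_apply]
          exact hj.2
        · intro j _; exact e.symm_apply_apply j
        · intro j _; exact e.apply_symm_apply j
      rw [hcard]
    rw [hmap, hAe, hpres.measure_preimage (hAmeas (Fin.last n)).nullMeasurableSet]
  -- the target event equals X ⁻¹' A (last)
  have hevent : {ω | S (Fin.last n) ω ≤ lamhat ω} = X ⁻¹' (A (Fin.last n)) := by
    ext ω
    simp only [mem_setOf_eq, mem_preimage, hA, mem_setOf_eq, hc, hXdef]
    rw [hlamhat ω,
      Conformal.le_kthSmallest_iff (fun j : Fin n => S j.castSucc ω) k hk1 hk (S (Fin.last n) ω)]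
    have : (Finset.univ.filter (fun j : Fin (n+1) => S j ω < S (Fin.last n) ω)).card
        = (Finset.univ.filter (fun j : Fin n => S j.castSucc ω < S (Fin.last n) ω)).card := by
      rw [Finset.card_filter, Finset.card_filter, Fin.sum_univ_castSucc]
      simp
    rw [this]
  -- the events X ⁻¹' A i are measurable
  have hEmeas : ∀ i, MeasurableSet (X ⁻¹' (A i)) := fun i => hXmeas (hAmeas i)
  -- pointwise: sum of indicators is at least k
  have hpoint : ∀ ω, (k : ℝ≥0∞) ≤ ∑ i : Fin (n+1),
      (X ⁻¹' (A i)).indicator (fun _ => (1:ℝ≥0∞)) ω := by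
    intro ω
    have hgood := Conformal.card_good (X ω) k hk1 (le_trans hk (Nat.le_succ n))
    calc (k : ℝ≥0∞)
        ≤ ((Finset.univ.filter (fun i : Fin (n+1) =>
            (Finset.univ.filter (fun j => X ω j < X ω i)).card < k)).card : ℝ≥0∞) := by
          exact_mod_cast hgood
      _ = ∑ i : Fin (n+1), (X ⁻¹' (A i)).indicator (fun _ => (1:ℝ≥0∞)) ω := by
          rw [Finset.card_filter]
          push_cast
          refine Finset.sum_congr rfl fun i _ => ?_
          by_cases hcase : (Finset.univ.filter (fun j => X ω j < X ω i)).card < k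
          · rw [if_pos hcase, Set.indicator_of_mem]
            simpa only [mem_preimage, hA, mem_setOf_eq, hc] using hcase
          · rw [if_neg hcase, Set.indicator_of_notMem]
            simpa only [mem_preimage, hA, mem_setOf_eq, hc] using hcase
  -- integrate
  have hsum : (k : ℝ≥0∞) ≤ ∑ i : Fin (n+1), P (X ⁻¹' (A i)) := by
    have h1 : (k : ℝ≥0∞) = ∫⁻ _, (k : ℝ≥0∞) ∂P := by
      rw [lintegral_const, measure_univ, mul_one]
    rw [h1]
    calc ∫⁻ _, (k : ℝ≥0∞) ∂P
        ≤ ∫⁻ ω, ∑ i : Fin (n+1), (X ⁻¹' (A i)).indicator (fun _ => (1:ℝ≥0∞)) ω ∂P :=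
          lintegral_mono hpoint
      _ = ∑ i : Fin (n+1), ∫⁻ ω, (X ⁻¹' (A i)).indicator (fun _ => (1:ℝ≥0∞)) ω ∂P := by
          rw [lintegral_finset_sum]
          intro i _
          exact measurable_const.indicator (hEmeas i)
      _ = ∑ i : Fin (n+1), P (X ⁻¹' (A i)) := by
          refine Finset.sum_congr rfl fun i _ => ?_
          rw [lintegral_indicator (hEmeas i), MeasureTheory.setLIntegral_one]
  -- identify each term
  have heach : ∀ i, P (X ⁻¹' (A i)) = P {ω | S (Fin.last n) ω ≤ lamhat ω} := by
    intro i
    rw [hevent, ← Measure.map_apply hXmeas (hAmeas i),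
      ← Measure.map_apply hXmeas (hAmeas (Fin.last n)), hperm i]
  set p := P {ω | S (Fin.last n) ω ≤ lamhat ω} with hp
  have hsum2 : (k : ℝ≥0∞) ≤ (n + 1 : ℕ) * p := by
    calc (k : ℝ≥0∞) ≤ ∑ i : Fin (n+1), P (X ⁻¹' (A i)) := hsum
      _ = ∑ _i : Fin (n+1), p := Finset.sum_congr rfl fun i _ => heach i
      _ = (n + 1 : ℕ) * p := by rw [Finset.sum_const, Finset.card_univ, Fintype.card_fin,
            nsmul_eq_mul]
  -- convert to reals
  have hple : p ≠ ⊤ := measure_ne_top P _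
  have hreal : (k : ℝ) ≤ ((n:ℝ) + 1) * p.toReal := by
    have h2 : ((k : ℝ≥0∞)).toReal ≤ ((n + 1 : ℕ) * p).toReal := by
      apply ENNReal.toReal_mono _ hsum2
      exact ENNReal.mul_ne_top (by simp) hple
    rw [ENNReal.toReal_mul] at h2
    rw [ENNReal.toReal_natCast, ENNReal.toReal_natCast] at h2
    exact_mod_cast h2
  have hkge : (1 - α) * ((n:ℝ) + 1) ≤ (k : ℝ) := by
    rw [hkdef]
    exact_mod_cast Nat.le_ceil _
  have := hkge.trans hreal
  nlinarith [this, hnpos]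
end

section
/- (Correctness of the Bernoulli-sequence threshold) Let N ≥ 1, let 1 ≥ π_1 ≥ π_2 ≥ ⋯ ≥ π_N ≥ 0, and fix δ ∈ (0,1]. Define J* := max{ J ∈ {1,…,N} : (1/J)·∑_{j=1}^J π_j ≥ δ } (with J* := 0 if no such J exists), and set η* := π_{J*+1} if J* < N, and η* := 0 if J* = N. Then η* = inf{ η ∈ [0,1] : (1/max(1, #{j : π_j > η}))·∑_{j : π_j > η} (1 − π_j) ≤ 1 − δ }, where an empty sum is 0 (so the condition holds vacuously when no π_j exceeds η); moreover the infimum is attained, i.e. the condition holds at η = η*. -/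
open Finset
open scoped Classical

/-- averages of a decreasing sequence are decreasing (in ≥-δ form). -/
private lemma avg_anti (N : ℕ) (π : ℕ → ℝ)
    (hsorted : ∀ i j : ℕ, 1 ≤ i → i ≤ j → j ≤ N → π j ≤ π i) (δ : ℝ) :
    ∀ J k : ℕ, 1 ≤ k → k ≤ J → J ≤ N →
      δ ≤ (∑ j ∈ Finset.Icc 1 J, π j) / J → δ ≤ (∑ j ∈ Finset.Icc 1 k, π j) / k := by
  intro J
  induction J with
  | zero => intro k hk hkJ _ _; omega
  | succ J ih =>
    intro k hk hkJ hJN hd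
    rcases eq_or_lt_of_le hkJ with rfl | hlt
    · exact hd
    have hJ1 : 1 ≤ J := by omega
    refine ih k hk (by omega) (by omega) ?_
    have hsum : ∑ j ∈ Finset.Icc 1 (J+1), π j = (∑ j ∈ Finset.Icc 1 J, π j) + π (J+1) :=
      Finset.sum_Icc_succ_top (by omega) π
    have hlow : (J : ℝ) * π (J+1) ≤ ∑ j ∈ Finset.Icc 1 J, π j := by
      have : ∑ j ∈ Finset.Icc 1 J, π (J+1) ≤ ∑ j ∈ Finset.Icc 1 J, π j :=
        Finset.sum_le_sum (fun j hj => by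
          simp only [Finset.mem_Icc] at hj
          exact hsorted j (J+1) hj.1 (by omega) hJN)
      simpa [Finset.sum_const, Nat.card_Icc, mul_comm] using this
    have hJpos : (0:ℝ) < J := by exact_mod_cast hJ1
    have hJ1pos : (0:ℝ) < (J:ℝ) + 1 := by linarith
    rw [le_div_iff₀ hJpos]
    rw [le_div_iff₀ (by push_cast; linarith : (0:ℝ) < ((J+1:ℕ):ℝ))] at hd
    rw [hsum] at hd
    push_cast at hd ⊢
    nlinarith

/-- the set of indices exceeding a threshold is an initial interval. -/
private lemma filter_eq_Icc (N : ℕ) (π : ℕ → ℝ)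
    (hsorted : ∀ i j : ℕ, 1 ≤ i → i ≤ j → j ≤ N → π j ≤ π i) (η : ℝ) :
    ∃ m : ℕ, m ≤ N ∧ (Finset.Icc 1 N).filter (fun j => η < π j) = Finset.Icc 1 m := by
  set F := (Finset.Icc 1 N).filter (fun j => η < π j) with hF
  rcases F.eq_empty_or_nonempty with h | h
  · exact ⟨0, Nat.zero_le N, by simp [h]⟩
  · refine ⟨F.max' h, ?_, ?_⟩
    · have := F.max'_mem h
      simp only [hF, Finset.mem_filter, Finset.mem_Icc] at this
      exact this.1.2
    · ext i
      have hmF := F.max'_mem h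
      simp only [hF, Finset.mem_filter, Finset.mem_Icc] at hmF ⊢
      constructor
      · rintro ⟨⟨h1, _⟩, _⟩
        exact ⟨h1, F.le_max' i (by simp [hF, Finset.mem_filter, Finset.mem_Icc]; tauto)⟩
      · intro hi
        refine ⟨⟨hi.1, le_trans hi.2 hmF.1.2⟩, lt_of_lt_of_le hmF.2 ?_⟩
        exact hsorted i (F.max' h) hi.1 hi.2 hmF.1.2

private lemma cond_iff (π : ℕ → ℝ) (δ : ℝ) (m : ℕ) (hm : 1 ≤ m) :
    ((∑ j ∈ Finset.Icc 1 m, (1 - π j)) / max 1 ((Finset.Icc 1 m).card : ℝ) ≤ 1 - δ)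
      ↔ δ ≤ (∑ j ∈ Finset.Icc 1 m, π j) / m := by
  have hcard : (Finset.Icc 1 m).card = m := by rw [Nat.card_Icc]; omega
  have hmpos : (0:ℝ) < m := by exact_mod_cast hm
  have hmax : max (1:ℝ) ((Finset.Icc 1 m).card : ℝ) = m := by
    rw [hcard]; exact max_eq_right (by exact_mod_cast hm)
  rw [hmax, Finset.sum_sub_distrib, Finset.sum_const, hcard,
    div_le_iff₀ hmpos, le_div_iff₀ hmpos, nsmul_eq_mul, mul_one]
  constructor <;> intro <;> nlinarith

/-- Correctness of the Bernoulli-sequence threshold: for sorted confidence probabilities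
`1 ≥ π_1 ≥ ⋯ ≥ π_N ≥ 0` and a target level `δ ∈ (0,1]`, the threshold `η*` returned by the
Bernoulli sequence predictive set algorithm equals
`inf{ η ∈ [0,1] : (1/max(1, #{j : π_j > η})) ∑_{j : π_j > η} (1 − π_j) ≤ 1 − δ }`,
and the defining condition holds at `η = η*` (the infimum is attained). -/
theorem bernoulli_threshold_correct
    (N : ℕ) (hN : 1 ≤ N)
    (π : ℕ → ℝ)
    (hsorted : ∀ i j : ℕ, 1 ≤ i → i ≤ j → j ≤ N → π j ≤ π i)
    (hbounds : ∀ j : ℕ, 1 ≤ j → j ≤ N → π j ∈ Set.Icc (0 : ℝ) 1)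
    (δ : ℝ) (hδ : δ ∈ Set.Ioc (0 : ℝ) 1)
    -- `J* = max{J ∈ {1,…,N} : (1/J) ∑_{j=1}^J π_j ≥ δ}`, with `J* = 0` if no such `J`
    (Jstar : ℕ)
    (hJstar : Jstar = sSup {J : ℕ | 1 ≤ J ∧ J ≤ N ∧ δ ≤ (∑ j ∈ Finset.Icc 1 J, π j) / J})
    -- `η* = π_{J*+1}` if `J* < N`, and `η* = 0` if `J* = N`
    (ηstar : ℝ)
    (hηstar : ηstar = if Jstar < N then π (Jstar + 1) else 0) :
    ηstar = sInf {η : ℝ | 0 ≤ η ∧ η ≤ 1 ∧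
        (∑ j ∈ (Finset.Icc 1 N).filter (fun j => η < π j), (1 - π j)) /
            max 1 (((Finset.Icc 1 N).filter (fun j => η < π j)).card : ℝ) ≤ 1 - δ} ∧
      (∑ j ∈ (Finset.Icc 1 N).filter (fun j => ηstar < π j), (1 - π j)) /
          max 1 (((Finset.Icc 1 N).filter (fun j => ηstar < π j)).card : ℝ) ≤ 1 - δ := by
  obtain ⟨hδ0, hδ1⟩ := hδ
  set S : Set ℕ := {J : ℕ | 1 ≤ J ∧ J ≤ N ∧ δ ≤ (∑ j ∈ Finset.Icc 1 J, π j) / J} with hSdef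
  have hSbdd : BddAbove S := ⟨N, fun J hJ => hJ.2.1⟩
  have hub : ∀ k ∈ S, k ≤ Jstar := fun k hk => by rw [hJstar]; exact le_csSup hSbdd hk
  have hJmem : 1 ≤ Jstar → Jstar ∈ S := by
    intro h
    rcases Set.eq_empty_or_nonempty S with he | hne
    · rw [hJstar, he] at h
      simp [csSup_empty] at h
    · rw [hJstar]
      exact Nat.sSup_mem hne hSbdd
  have hJN : Jstar ≤ N := by
    rcases Nat.eq_zero_or_pos Jstar with h | h
    · omega
    · exact (hJmem h).2.1
  have hdown : ∀ k, 1 ≤ k → k ≤ Jstar → k ∈ S := by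
    intro k h1 h2
    have hJ := hJmem (le_trans h1 h2)
    exact ⟨h1, le_trans h2 hJN, avg_anti N π hsorted δ Jstar k h1 h2 hJN hJ.2.2⟩
  have hη0 : 0 ≤ ηstar := by
    rw [hηstar]; split_ifs with h
    · exact (hbounds _ (by omega) (by omega)).1
    · exact le_refl 0
  have hη1 : ηstar ≤ 1 := by
    rw [hηstar]; split_ifs with h
    · exact (hbounds _ (by omega) (by omega)).2
    · exact zero_le_one
  obtain ⟨m, hmN, hFm⟩ := filter_eq_Icc N π hsorted ηstar
  have hcond : (∑ j ∈ (Finset.Icc 1 N).filter (fun j => ηstar < π j), (1 - π j)) /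
      max 1 (((Finset.Icc 1 N).filter (fun j => ηstar < π j)).card : ℝ) ≤ 1 - δ := by
    rw [hFm]
    rcases Nat.eq_zero_or_pos m with rfl | hm
    · have hempty : Finset.Icc 1 0 = (∅ : Finset ℕ) := by simp
      rw [hempty]
      simp
      linarith
    · rw [cond_iff π δ m hm]
      have hmmem : m ∈ (Finset.Icc 1 N).filter (fun j => ηstar < π j) := by
        rw [hFm]; exact Finset.mem_Icc.mpr ⟨hm, le_refl m⟩
      simp only [Finset.mem_filter, Finset.mem_Icc] at hmmem
      have hmJ : m ≤ Jstar := by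
        by_cases hc : Jstar < N
        · by_contra hmgt
          push_neg at hmgt
          have hle := hsorted (Jstar+1) m (by omega) (by omega) hmN
          rw [hηstar, if_pos hc] at hmmem
          linarith [hmmem.2]
        · omega
      exact (hdown m hm hmJ).2.2
  have hmemT : ηstar ∈ {η : ℝ | 0 ≤ η ∧ η ≤ 1 ∧
      (∑ j ∈ (Finset.Icc 1 N).filter (fun j => η < π j), (1 - π j)) /
          max 1 (((Finset.Icc 1 N).filter (fun j => η < π j)).card : ℝ) ≤ 1 - δ} :=
    ⟨hη0, hη1, hcond⟩
  have hlb : ∀ η ∈ {η : ℝ | 0 ≤ η ∧ η ≤ 1 ∧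
      (∑ j ∈ (Finset.Icc 1 N).filter (fun j => η < π j), (1 - π j)) /
          max 1 (((Finset.Icc 1 N).filter (fun j => η < π j)).card : ℝ) ≤ 1 - δ},
      ηstar ≤ η := by
    rintro η ⟨hη0', hη1', hc⟩
    by_cases hcase : Jstar < N
    · rw [hηstar, if_pos hcase]
      by_contra hlt
      push_neg at hlt
      obtain ⟨m', hmN', hFm'⟩ := filter_eq_Icc N π hsorted η
      have hsub : Jstar + 1 ∈ (Finset.Icc 1 N).filter (fun j => η < π j) := by
        simp only [Finset.mem_filter, Finset.mem_Icc]
        exact ⟨⟨by omega, by omega⟩, hlt⟩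
      rw [hFm', Finset.mem_Icc] at hsub
      rw [hFm', cond_iff π δ m' (by omega)] at hc
      have hmS : m' ∈ S := ⟨by omega, hmN', hc⟩
      have := hub m' hmS
      omega
    · rw [hηstar, if_neg hcase]
      exact hη0'
  exact ⟨le_antisymm (le_csInf ⟨ηstar, hmemT⟩ hlb)
      (csInf_le ⟨0, fun x hx => hx.1⟩ hmemT), hcond⟩
end
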